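/- arXiv:1811.11411 — 6 statements merged into one kernel-verified Lean document; each statement's English description precedes it below -/
import Mathlib

section
/- If u, v, w are vertices of a tree T with uv and vw edges of T, then 2·f_T(v) > f_T(u) + f_T(w), where f_T(x) is the number of subtrees of T containing x. -/
open SimpleGraph

/-- `numContaining G v`: the number of connected subgraphs of `G` containing `v`. -/
noncomputable def numContaining {V : Type*} (G : SimpleGraph V) (v : V) : ℕ :=
  Nat.card {H : G.Subgraph // H.Connected ∧ v ∈ H.verts}

section Aux
variable {V : Type*} {G : SimpleGraph V}

lemma aux_finite_subgraph [Finite V] : Finite G.Subgraph := by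
  apply Finite.of_injective (fun H : G.Subgraph => (H.verts, H.Adj))
  intro H K h
  exact SimpleGraph.Subgraph.ext (congrArg Prod.fst h) (congrArg Prod.snd h)

/-- in a tree, any connected subgraph containing both `u` and `w` contains `v` -/
lemma aux_mid (hT : G.IsTree) {u v w : V} (huw : u ≠ w) (huv : G.Adj u v) (hvw : G.Adj v w)
    {S : G.Subgraph} (hS : S.Connected) (hu : u ∈ S.verts) (hw : w ∈ S.verts) :
    v ∈ S.verts := by
  classical
  have hpath : (Walk.cons huv (Walk.cons hvw Walk.nil)).IsPath := by
    simp [Walk.cons_isPath_iff, huv.ne, hvw.ne, huw]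
  obtain ⟨p⟩ := hS ⟨u, hu⟩ ⟨w, hw⟩
  have hq : v ∈ (p.map S.hom).support := by
    have h2 := hT.IsAcyclic.path_unique ⟨(p.map S.hom).bypass, (p.map S.hom).bypass_isPath⟩
      ⟨Walk.cons huv (Walk.cons hvw Walk.nil), hpath⟩
    apply (p.map S.hom).support_bypass_subset
    have h3 : (p.map S.hom).bypass = Walk.cons huv (Walk.cons hvw Walk.nil) :=
      congrArg Subtype.val h2
    rw [h3]; simp
  rw [Walk.support_map] at hq
  obtain ⟨b, _, rfl⟩ := List.mem_map.mp hq
  exact b.2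

lemma aux_conn_sup {S : G.Subgraph} (hS : S.Connected) {x y : V} (h : G.Adj x y)
    (hx : x ∈ S.verts) : (S ⊔ G.subgraphOfAdj h).Connected := by
  refine Subgraph.connected_sup hS.preconnected (Subgraph.subgraphOfAdj_connected h).preconnected ⟨x, ?_⟩
  simp [hx]

lemma aux_sup_verts {S : G.Subgraph} {x y : V} (h : G.Adj x y) :
    (S ⊔ G.subgraphOfAdj h).verts = S.verts ∪ {x, y} := by
  simp

lemma aux_cancel {x y : V} (h : G.Adj x y) {S1 S2 : G.Subgraph}
    (hx1 : x ∈ S1.verts) (hx2 : x ∈ S2.verts) (hy1 : y ∉ S1.verts) (hy2 : y ∉ S2.verts)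
    (heq : S1 ⊔ G.subgraphOfAdj h = S2 ⊔ G.subgraphOfAdj h) : S1 = S2 := by
  have hv := congrArg Subgraph.verts heq
  rw [aux_sup_verts, aux_sup_verts] at hv
  ext a b
  · constructor
    · intro ha
      have : a ∈ S2.verts ∪ {x, y} := by rw [← hv]; exact Set.mem_union_left _ ha
      rcases this with h' | h' 
      · exact h'
      · rcases h' with rfl | rfl
        · exact hx2
        · exact absurd ha hy1
    · intro ha
      have : a ∈ S1.verts ∪ {x, y} := by rw [hv]; exact Set.mem_union_left _ ha
      rcases this with h' | h'
      · exact h'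
      · rcases h' with rfl | rfl
        · exact hx1
        · exact absurd ha hy2
  · have hA : (S1 ⊔ G.subgraphOfAdj h).Adj a b ↔ (S2 ⊔ G.subgraphOfAdj h).Adj a b := by
      rw [heq]
    simp only [Subgraph.sup_adj, subgraphOfAdj_adj] at hA
    constructor
    · intro hab
      have hay : a ≠ y := fun e => hy1 (e ▸ hab.fst_mem)
      have hby : b ≠ y := fun e => hy1 (e ▸ hab.snd_mem)
      rcases hA.mp (Or.inl hab) with h' | h'
      · exact h'
      · rw [Sym2.eq_iff] at h'
        rcases h' with ⟨rfl, rfl⟩ | ⟨rfl, rfl⟩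
        · exact absurd rfl hby
        · exact absurd rfl hay
    · intro hab
      have hay : a ≠ y := fun e => hy2 (e ▸ hab.fst_mem)
      have hby : b ≠ y := fun e => hy2 (e ▸ hab.snd_mem)
      rcases hA.mpr (Or.inl hab) with h' | h'
      · exact h'
      · rw [Sym2.eq_iff] at h'
        rcases h' with ⟨rfl, rfl⟩ | ⟨rfl, rfl⟩
        · exact absurd rfl hby
        · exact absurd rfl hay

end Aux

/-- If `u, v, w` are three vertices of a tree `T` with `uv` and `vw` edges, then
`2 f_T(v) > f_T(u) + f_T(w)`. -/
theorem subtree_count_concave {V : Type*} [Fintype V] (G : SimpleGraph V)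
    (hT : G.IsTree) (u v w : V) (huw : u ≠ w)
    (huv : G.Adj u v) (hvw : G.Adj v w) :
    numContaining G u + numContaining G w < 2 * numContaining G v := by
  classical
  haveI : Finite G.Subgraph := aux_finite_subgraph
  have huv' : u ≠ v := huv.ne
  have hwv' : w ≠ v := hvw.ne'
  set αu := {H : G.Subgraph // H.Connected ∧ u ∈ H.verts} with hαu
  set αv := {H : G.Subgraph // H.Connected ∧ v ∈ H.verts} with hαv
  set αw := {H : G.Subgraph // H.Connected ∧ w ∈ H.verts} with hαw
  haveI : Fintype αu := Fintype.ofFinite _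
  haveI : Fintype αv := Fintype.ofFinite _
  haveI : Fintype αw := Fintype.ofFinite _
  -- the injection
  let F : αu ⊕ αw → αv × Bool := fun s =>
    match s with
    | .inl ⟨S, hS, hu⟩ =>
        if h : v ∈ S.verts then (⟨S, hS, h⟩, false)
        else (⟨S ⊔ G.subgraphOfAdj huv, aux_conn_sup hS huv hu, by
          rw [aux_sup_verts]; right; right; rfl⟩, true)
    | .inr ⟨S, hS, hw⟩ =>
        if h : v ∈ S.verts then (⟨S, hS, h⟩, true)
        else (⟨S ⊔ G.subgraphOfAdj hvw.symm, aux_conn_sup hS hvw.symm hw, by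
          rw [aux_sup_verts]; right; right; rfl⟩, false)
  have hinj : Function.Injective F := by
    rintro (⟨S1, hS1, hu1⟩ | ⟨S1, hS1, hw1⟩) (⟨S2, hS2, hu2⟩ | ⟨S2, hS2, hw2⟩) h <;>
      simp only [F] at h <;> split_ifs at h with h1 h2 h2 <;>
      obtain ⟨h3, h4⟩ := Prod.mk.injEq .. ▸ h <;>
      first
      | (exact Bool.noConfusion h4)
      | skip
    · exact congrArg Sum.inl (Subtype.ext (show S1 = S2 from congrArg Subtype.val h3))
    · -- inl/inl, both added
      exact congrArg Sum.inl (Subtype.ext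
        (aux_cancel huv hu1 hu2 h1 h2 (congrArg Subtype.val h3)))
    · -- inl kept (false) vs inr added (false): S1 = S2 ⊔ edge(w,v)
      exfalso
      have hset : S1.verts = S2.verts ∪ {w, v} := by
        rw [congrArg Subgraph.verts (congrArg Subtype.val h3)]
        exact aux_sup_verts hvw.symm
      have hu2' : u ∈ S2.verts := by
        have : u ∈ S2.verts ∪ {w, v} := hset ▸ hu1
        rcases this with h' | h'
        · exact h'
        · rcases h' with rfl | rfl
          · exact absurd rfl huw
          · exact absurd rfl huv'
      exact h2 (aux_mid hT huw huv hvw hS2 hu2' hw2)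
    · -- inl added (true) vs inr kept (true): S2 = S1 ⊔ edge(u,v)
      exfalso
      have hset : S2.verts = S1.verts ∪ {u, v} := by
        rw [← congrArg Subgraph.verts (congrArg Subtype.val h3)]
        exact aux_sup_verts huv
      have hw1' : w ∈ S1.verts := by
        have : w ∈ S1.verts ∪ {u, v} := hset ▸ hw2
        rcases this with h' | h'
        · exact h'
        · rcases h' with rfl | rfl
          · exact absurd rfl huw.symm
          · exact absurd rfl hwv'
      exact h1 (aux_mid hT huw huv hvw hS1 hu1 hw1')
    · -- inr kept (true) vs inl added (true)
      exfalso
      have hset : S1.verts = S2.verts ∪ {u, v} := by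
        rw [congrArg Subgraph.verts (congrArg Subtype.val h3)]
        exact aux_sup_verts huv
      have hw2' : w ∈ S2.verts := by
        have : w ∈ S2.verts ∪ {u, v} := hset ▸ hw1
        rcases this with h' | h'
        · exact h'
        · rcases h' with rfl | rfl
          · exact absurd rfl huw.symm
          · exact absurd rfl hwv'
      exact h2 (aux_mid hT huw huv hvw hS2 hu2 hw2')
    · -- inr added (false) vs inl kept (false)
      exfalso
      have hset : S2.verts = S1.verts ∪ {w, v} := by
        rw [← congrArg Subgraph.verts (congrArg Subtype.val h3)]
        exact aux_sup_verts hvw.symm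
      have hu1' : u ∈ S1.verts := by
        have : u ∈ S1.verts ∪ {w, v} := hset ▸ hu2
        rcases this with h' | h'
        · exact h'
        · rcases h' with rfl | rfl
          · exact absurd rfl huw
          · exact absurd rfl huv'
      exact h1 (aux_mid hT huw huv hvw hS1 hu1' hw1)
    · exact congrArg Sum.inr (Subtype.ext (show S1 = S2 from congrArg Subtype.val h3))
    · exact congrArg Sum.inr (Subtype.ext
        (aux_cancel hvw.symm hw1 hw2 h1 h2 (congrArg Subtype.val h3)))
  have hnm : (⟨⟨G.singletonSubgraph v, Subgraph.singletonSubgraph_connected, rfl⟩, false⟩ : αv × Bool)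
      ∉ Set.range F := by
    rintro ⟨(⟨S, hS, hu1⟩ | ⟨S, hS, hw1⟩), hFs⟩ <;> simp only [F] at hFs <;>
        split_ifs at hFs with h1 <;>
      obtain ⟨h3, h4⟩ := Prod.mk.injEq .. ▸ hFs
    · -- kept left: S = singleton v but u ∈ S
      have : S = G.singletonSubgraph v := congrArg Subtype.val h3
      rw [this] at hu1
      exact huv' hu1
    · exact Bool.noConfusion h4
    · exact Bool.noConfusion h4
    · have : S ⊔ G.subgraphOfAdj hvw.symm = G.singletonSubgraph v := congrArg Subtype.val h3
      have hw' : w ∈ (G.singletonSubgraph v).verts := by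
        rw [← this, aux_sup_verts]; right; left; rfl
      exact hwv' hw'
  have hlt := Fintype.card_lt_of_injective_of_notMem F hinj hnm
  rw [Fintype.card_sum, Fintype.card_prod, Fintype.card_bool] at hlt
  have e1 : numContaining G u = Fintype.card αu := Nat.card_eq_fintype_card
  have e2 : numContaining G v = Fintype.card αv := Nat.card_eq_fintype_card
  have e3 : numContaining G w = Fintype.card αw := Nat.card_eq_fintype_card
  rw [e1, e2, e3]
  omega
end

section
/- For any tree T, the set of vertices maximizing f_T (the subtree core of T) consists of either a single vertex or two adjacent vertices. -/
open SimpleGraph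

section Aux

variable {V : Type*}

instance subtreeCoreAux.finiteSubgraph [Finite V] (G : SimpleGraph V) : Finite G.Subgraph :=
  Finite.of_injective (fun H : G.Subgraph => (H.verts, H.Adj))
    (fun a b h => SimpleGraph.Subgraph.ext (congrArg Prod.fst h) (congrArg Prod.snd h))

/-- Connected subgraphs containing `u` but not `v`. -/
def sideSet (G : SimpleGraph V) (u v : V) : Set G.Subgraph :=
  {H | H.Connected ∧ u ∈ H.verts ∧ v ∉ H.verts}

variable [Fintype V] {G : SimpleGraph V}

lemma numContaining_split (u v : V) :
    numContaining G u
      = {H : G.Subgraph | H.Connected ∧ u ∈ H.verts ∧ v ∈ H.verts}.ncard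
        + (sideSet G u v).ncard := by
  have h0 : numContaining G u = {H : G.Subgraph | H.Connected ∧ u ∈ H.verts}.ncard := by
    unfold numContaining
    exact Nat.card_coe_set_eq _
  rw [h0, ← Set.ncard_inter_add_ncard_diff_eq_ncard
      {H : G.Subgraph | H.Connected ∧ u ∈ H.verts} {H : G.Subgraph | v ∈ H.verts}
      (Set.toFinite _)]
  congr 1
  · congr 1; ext H; simp only [Set.mem_inter_iff, Set.mem_setOf_eq]; tauto
  · congr 1; ext H
    simp only [Set.mem_diff, Set.mem_setOf_eq, sideSet]; tauto

lemma balance (u v : V) :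
    numContaining G u + (sideSet G v u).ncard
      = numContaining G v + (sideSet G u v).ncard := by
  rw [numContaining_split u v, numContaining_split v u]
  have h : {H : G.Subgraph | H.Connected ∧ u ∈ H.verts ∧ v ∈ H.verts}
      = {H : G.Subgraph | H.Connected ∧ v ∈ H.verts ∧ u ∈ H.verts} := by
    ext H; simp only [Set.mem_setOf_eq]; tauto
  rw [h]; ring

/-- In a tree, a connected subgraph containing the endpoints of a 2-edge path contains
the middle vertex. -/
lemma mid_mem (hT : G.IsTree) {u v w : V} (huv : G.Adj u v) (hvw : G.Adj v w)
    (huw : u ≠ w) {H : G.Subgraph} (hH : H.Connected) (hu : u ∈ H.verts)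
    (hw : w ∈ H.verts) : v ∈ H.verts := by
  classical
  obtain ⟨q⟩ := (SimpleGraph.Subgraph.connected_iff'.mp hH) ⟨u, hu⟩ ⟨w, hw⟩
  have hsupp : ∀ x ∈ (q.map H.hom).support, x ∈ H.verts := by
    intro x hx
    rw [Walk.support_map] at hx
    obtain ⟨⟨y, hy⟩, _, rfl⟩ := List.mem_map.mp hx
    exact hy
  have hbp : (q.map H.hom).bypass.IsPath := Walk.bypass_isPath _
  have hP2 : (Walk.cons huv (Walk.cons hvw Walk.nil)).IsPath := by
    simp [Walk.isPath_def, huv.ne, hvw.ne, huw]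
  have heq := hT.2.path_unique ⟨(q.map H.hom).bypass, hbp⟩ ⟨_, hP2⟩
  have hveq : (q.map H.hom).bypass = Walk.cons huv (Walk.cons hvw Walk.nil) :=
    congrArg Subtype.val heq
  have hv : v ∈ (q.map H.hom).bypass.support := by rw [hveq]; simp
  exact hsupp v (Walk.support_bypass_subset _ hv)

lemma sideSet_succ_le (hT : G.IsTree) {u v w : V} (huv : G.Adj u v) (hvw : G.Adj v w)
    (huw : u ≠ w) : (sideSet G u v).ncard + 1 ≤ (sideSet G v w).ncard := by
  classical
  set F : G.Subgraph → G.Subgraph := fun H => H ⊔ G.subgraphOfAdj huv with hF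
  have himg : F '' sideSet G u v ⊆ sideSet G v w := by
    rintro _ ⟨H, ⟨hc, hu, hv⟩, rfl⟩
    refine ⟨Subgraph.connected_sup hc.preconnected (Subgraph.subgraphOfAdj_connected huv).preconnected ⟨u, hu, by simp⟩, Or.inr (by simp), ?_⟩
    intro hwmem
    rcases (by have h' := hwmem; simp [hF] at h'; tauto : w ∈ H.verts ∨ w = u ∨ w = v) with hw | hw | hw
    · exact hv (mid_mem hT huv hvw huw hc hu hw)
    · exact huw hw.symm
    · exact hvw.ne hw.symm
  have key : ∀ H ∈ sideSet G u v, (F H).deleteVerts {v} = H := by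
    rintro H ⟨hc, hu, hv⟩
    apply SimpleGraph.Subgraph.ext
    · ext a
      simp only [Subgraph.deleteVerts_verts, hF, Subgraph.verts_sup, subgraphOfAdj_verts,
        Set.mem_diff, Set.mem_union, Set.mem_insert_iff, Set.mem_singleton_iff]
      constructor
      · rintro ⟨ha | ha | ha, hav⟩
        · exact ha
        · rw [ha]; exact hu
        · exact absurd ha hav
      · intro ha
        exact ⟨Or.inl ha, fun h => hv (h ▸ ha)⟩
    · ext a b
      simp only [Subgraph.deleteVerts_adj, hF, Subgraph.sup_adj, subgraphOfAdj_adj,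
        Set.mem_singleton_iff]
      constructor
      · rintro ⟨_, hav, _, hbv, (h | h)⟩
        · exact h
        · exfalso
          rw [Sym2.eq_iff] at h
          rcases h with ⟨h1, h2⟩ | ⟨h1, h2⟩
          · exact hbv h2.symm
          · exact hav h2.symm
      · intro h
        have ha := h.fst_mem
        have hb := h.snd_mem
        exact ⟨Or.inl ha, fun he => hv (he ▸ ha), Or.inl hb, fun he => hv (he ▸ hb), Or.inl h⟩
  have hinj : Set.InjOn F (sideSet G u v) := by
    intro H1 h1 H2 h2 heq
    rw [← key H1 h1, ← key H2 h2, heq]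
  have hsing_mem : G.singletonSubgraph v ∈ sideSet G v w :=
    ⟨Subgraph.singletonSubgraph_connected, rfl, by
      simp only [singletonSubgraph_verts, Set.mem_singleton_iff]
      exact hvw.ne'⟩
  have hsing_not : G.singletonSubgraph v ∉ F '' sideSet G u v := by
    rintro ⟨H, ⟨hc, hu, hv⟩, heq⟩
    have : u ∈ (F H).verts := Or.inl hu
    rw [heq] at this
    simp only [singletonSubgraph_verts, Set.mem_singleton_iff] at this
    exact huv.ne this
  have hcount : (insert (G.singletonSubgraph v) (F '' sideSet G u v)).ncard
      = (sideSet G u v).ncard + 1 := by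
    rw [Set.ncard_insert_of_notMem hsing_not (Set.toFinite _),
      Set.ncard_image_of_injOn hinj]
  calc (sideSet G u v).ncard + 1
      = (insert (G.singletonSubgraph v) (F '' sideSet G u v)).ncard := hcount.symm
    _ ≤ (sideSet G v w).ncard :=
        Set.ncard_le_ncard (Set.insert_subset hsing_mem himg) (Set.toFinite _)

lemma step_lemma (hT : G.IsTree) {u v w : V} (huv : G.Adj u v) (hvw : G.Adj v w)
    (huw : u ≠ w) (hmax : numContaining G v ≤ numContaining G u) :
    numContaining G w + 2 ≤ numContaining G v := by
  have b1 := balance (G := G) u v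
  have b2 := balance (G := G) v w
  have i1 := sideSet_succ_le hT huv hvw huw
  have i2 := sideSet_succ_le hT hvw.symm huv.symm (Ne.symm huw)
  omega

lemma descend (hT : G.IsTree) {v b : V} (p : G.Walk v b) :
    p.IsPath → 1 ≤ p.length → ∀ u : V, G.Adj u v → u ∉ p.support →
    numContaining G v ≤ numContaining G u → numContaining G b < numContaining G v := by
  induction p with
  | nil => intro _ hl; simp at hl
  | @cons v c b h q ih =>
    intro hp _ u hu hus hfv
    rw [Walk.cons_isPath_iff] at hp
    have hcq : c ∈ q.support := Walk.start_mem_support q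
    have hus' : u ∉ q.support := fun hx => hus (by rw [Walk.support_cons]; exact List.mem_cons_of_mem _ hx)
    have huc : u ≠ c := fun he => hus' (he ▸ hcq)
    have hstep := step_lemma hT hu h huc hfv
    rcases Nat.eq_zero_or_pos q.length with h0 | hpos
    · obtain rfl : c = b := Walk.eq_of_length_eq_zero h0
      omega
    · have hrec := ih hp.1 hpos v h hp.2 (by omega)
      omega

lemma no_triangle (hT : G.IsTree) {a b c : V} (hab : G.Adj a b) (hbc : G.Adj b c)
    (hac : G.Adj a c) : False := by
  have h1 : (Walk.cons hac Walk.nil : G.Walk a c).IsPath := by simp [hac.ne]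
  have h2 : (Walk.cons hab (Walk.cons hbc Walk.nil) : G.Walk a c).IsPath := by
    simp [Walk.isPath_def, hab.ne, hbc.ne, hac.ne]
  have heq := hT.2.path_unique ⟨_, h1⟩ ⟨_, h2⟩
  have hlen := congrArg (fun p : G.Path a c => p.1.length) heq
  simp [Walk.length_cons] at hlen

end Aux

/-- The subtree core of a tree (the set of vertices maximizing the number of subtrees
containing them) consists of either one vertex or two adjacent vertices. -/
theorem subtree_core_singleton_or_adjacent_pair {V : Type*} [Fintype V]
    (G : SimpleGraph V) (hT : G.IsTree) :
    (∃ v : V, {x : V | ∀ u : V, numContaining G u ≤ numContaining G x} = {v}) ∨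
    (∃ v w : V, G.Adj v w ∧
      {x : V | ∀ u : V, numContaining G u ≤ numContaining G x} = {v, w}) := by
  classical
  have hconn := hT.1
  haveI : Nonempty V := hconn.nonempty
  obtain ⟨v, hv⟩ := Finite.exists_max (numContaining G)
  have hvS : v ∈ {x : V | ∀ u : V, numContaining G u ≤ numContaining G x} := hv
  have hadj : ∀ a ∈ {x : V | ∀ u : V, numContaining G u ≤ numContaining G x},
      ∀ b ∈ {x : V | ∀ u : V, numContaining G u ≤ numContaining G x},
      a ≠ b → G.Adj a b := by
    intro a ha b hb hab
    simp only [Set.mem_setOf_eq] at ha hb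
    obtain ⟨t⟩ := hconn.preconnected a b
    have hex : ∃ p : G.Walk a b, p.IsPath := ⟨t.bypass, t.bypass_isPath⟩
    obtain ⟨p, hpath⟩ := hex
    revert hpath
    cases p with
    | nil => intro _; exact absurd rfl hab
    | @cons _ c _ h q =>
      intro hpath
      rw [Walk.cons_isPath_iff] at hpath
      rcases Nat.eq_zero_or_pos q.length with h0 | hpos
      · have hcb := Walk.eq_of_length_eq_zero h0
        exact hcb ▸ h
      · exfalso
        have hlt := descend hT q hpath.1 hpos a h hpath.2 (ha c)
        have h1 := hb a
        have h2 := ha c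
        omega
  by_cases hone : ∀ x ∈ {x : V | ∀ u : V, numContaining G u ≤ numContaining G x}, x = v
  · left
    exact ⟨v, Set.eq_singleton_iff_unique_mem.mpr ⟨hvS, hone⟩⟩
  · push_neg at hone
    obtain ⟨w, hwS, hwv⟩ := hone
    right
    refine ⟨v, w, hadj v hvS w hwS (Ne.symm hwv), ?_⟩
    ext x
    simp only [Set.mem_setOf_eq, Set.mem_insert_iff, Set.mem_singleton_iff]
    constructor
    · intro hx
      by_contra hcon
      push_neg at hcon
      obtain ⟨hxv, hxw⟩ := hcon
      exact no_triangle hT (hadj x hx v hvS hxv) (hadj v hvS w hwS (Ne.symm hwv))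
        (hadj x hx w hwS hxw)
    · rintro (rfl | rfl)
      · exact hv
      · exact hwS
end

section
/- Among all connected graphs G on n vertices, F(G) is maximized by the complete graph K_n and minimized by the path P_n; moreover n(n+1)/2 ≤ F(G) ≤ Σ_{i=1}^n C(n,i)·h_i, where h_i is the number of connected labeled graphs on i vertices. -/
open SimpleGraph

/-- The core index of a graph `G`: the number of connected subgraphs of `G`. -/
noncomputable def coreIndex {V : Type*} (G : SimpleGraph V) : ℕ :=
  Nat.card {H : G.Subgraph // H.Connected}

/-- `numConnectedGraphs i`: the number of connected labeled graphs on `i` vertices. -/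
noncomputable def numConnectedGraphs (i : ℕ) : ℕ :=
  Nat.card {G : SimpleGraph (Fin i) // G.Connected}

section Auxiliary

/-- The subgraphs of a graph on a finite vertex type form a finite type. -/
instance subgraphFinite {V : Type*} [Finite V] {G : SimpleGraph V} : Finite G.Subgraph :=
  Finite.of_injective (fun H => (H.verts, H.Adj))
    (fun _ _ h => SimpleGraph.Subgraph.ext (congrArg Prod.fst h) (congrArg Prod.snd h))

/-- If `x` and `y` lie on a walk `p` and their distance equals the length of `p`, then
`{x, y}` must be the pair of endpoints of `p`. -/
private lemma endpoints_of_dist {V : Type*} {G : SimpleGraph V} {u v x y : V}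
    (p : G.Walk u v) (hx : x ∈ p.support) (hy : y ∈ p.support)
    (hd : G.dist x y = p.length) : s(x, y) = s(u, v) := by
  classical
  have hspec := p.take_spec hx
  have hlen : (p.takeUntil x hx).length + (p.dropUntil x hx).length = p.length := by
    conv_rhs => rw [← hspec]
    rw [Walk.length_append]
  have hy' : y ∈ (p.takeUntil x hx).support ∨ y ∈ (p.dropUntil x hx).support := by
    rw [← Walk.mem_support_append_iff, hspec]; exact hy
  rcases hy' with hy1 | hy2
  · set q := p.takeUntil x hx with hq
    have h1 : G.dist y x ≤ (q.dropUntil y hy1).length := dist_le _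
    have h2 : (q.takeUntil y hy1).length + (q.dropUntil y hy1).length = q.length := by
      conv_rhs => rw [← q.take_spec hy1]
      rw [Walk.length_append]
    have hcomm : G.dist y x = G.dist x y := dist_comm ..
    have e1 : (p.dropUntil x hx).length = 0 := by omega
    have e2 : (q.takeUntil y hy1).length = 0 := by omega
    have hxv : x = v := Walk.eq_of_length_eq_zero e1
    have huy : u = y := Walk.eq_of_length_eq_zero e2
    rw [← hxv, ← huy, Sym2.eq_swap]
  · set q := p.dropUntil x hx with hq
    have h1 : G.dist x y ≤ (q.takeUntil y hy2).length := dist_le _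
    have h2 : (q.takeUntil y hy2).length + (q.dropUntil y hy2).length = q.length := by
      conv_rhs => rw [← q.take_spec hy2]
      rw [Walk.length_append]
    have e1 : (p.takeUntil x hx).length = 0 := by omega
    have e2 : (q.dropUntil y hy2).length = 0 := by omega
    have hux : u = x := Walk.eq_of_length_eq_zero e1
    have hyv : y = v := Walk.eq_of_length_eq_zero e2
    rw [← hux, ← hyv]

/-- Lower bound: a connected graph has at least as many connected subgraphs as there are
unordered pairs of (not necessarily distinct) vertices, via shortest paths. -/
private lemma lower_bound {V : Type*} [Fintype V] {G : SimpleGraph V} (hG : G.Connected) :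
    Nat.card (Sym2 V) ≤ coreIndex G := by
  classical
  have hex : ∀ u v : V, ∃ p : G.Walk u v, p.IsPath ∧ p.length = G.dist u v := by
    intro u v
    obtain ⟨p, hp⟩ := hG.exists_walk_length_eq_dist u v
    exact ⟨p.bypass, p.bypass_isPath,
      le_antisymm (le_trans p.length_bypass_le hp.le) (dist_le _)⟩
  choose w hw1 hw2 using hex
  apply Nat.card_le_card_of_injective
    (fun s : Sym2 V => (⟨(w s.out.1 s.out.2).toSubgraph, Walk.toSubgraph_connected _⟩ :
      {H : G.Subgraph // H.Connected}))
  intro s t h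
  simp only [Subtype.mk.injEq] at h
  set p := w s.out.1 s.out.2 with hp
  set q := w t.out.1 t.out.2 with hq
  have hsup : ∀ z, z ∈ p.support ↔ z ∈ q.support := by
    intro z
    rw [← Walk.mem_verts_toSubgraph, ← Walk.mem_verts_toSubgraph, h]
  have hlen : p.length = q.length := by
    have h1 : p.support.toFinset = q.support.toFinset := by
      ext z; simp only [List.mem_toFinset]; exact hsup z
    have h2 := List.toFinset_card_of_nodup (hw1 s.out.1 s.out.2).support_nodup
    have h3 := List.toFinset_card_of_nodup (hw1 t.out.1 t.out.2).support_nodup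
    have h4 := p.length_support
    have h5 := q.length_support
    rw [← hp] at h2
    rw [← hq] at h3
    rw [h1] at h2
    omega
  have hkey := endpoints_of_dist p ((hsup _).mpr q.start_mem_support)
    ((hsup _).mpr q.end_mem_support)
    (by rw [hw2 t.out.1 t.out.2] at hlen; exact hlen.symm)
  have : Sym2.mk t.out.1 t.out.2 = Sym2.mk s.out.1 s.out.2 := hkey
  exact (Quot.out_eq s).symm.trans (this.symm.trans (Quot.out_eq t))

/-- Discrete intermediate value property for walks in subgraphs of the path graph. -/
private lemma path_ivt {n : ℕ} {H : (pathGraph n).Subgraph} {x y : ↥H.verts}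
    (p : H.coe.Walk x y) (c : Fin n) :
    (x : Fin n) ≤ c → c ≤ (y : Fin n) → c ∈ H.verts := by
  induction p with
  | nil =>
    intro h1 h2
    have : c = _ := le_antisymm h2 h1
    exact this ▸ Subtype.coe_prop _
  | @cons a b y' hadj p' ih =>
    intro h1 h2
    by_cases hb : (b : Fin n) ≤ c
    · exact ih hb h2
    · rw [not_le, Fin.lt_def] at hb
      rw [Fin.le_def] at h1
      rcases pathGraph_adj.mp (H.adj_sub hadj) with hpg | hpg
      · have : (a : Fin n) = c := Fin.ext (by omega)
        exact this ▸ Subtype.coe_prop a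
      · omega

/-- Any walk in a subgraph of the path graph crossing the cut between `c` and `c + 1`
uses the edge `{c, c + 1}`. -/
private lemma path_cross {n : ℕ} {H : (pathGraph n).Subgraph} {x y : ↥H.verts}
    (p : H.coe.Walk x y) (c d : Fin n) (hcd : (c : ℕ) + 1 = (d : ℕ)) :
    (x : Fin n) ≤ c → d ≤ (y : Fin n) → H.Adj c d := by
  induction p with
  | nil =>
    intro h1 h2
    rw [Fin.le_def] at h1 h2
    omega
  | @cons a b y' hadj p' ih =>
    intro h1 h2
    by_cases hb : (b : Fin n) ≤ c
    · exact ih hb h2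
    · rw [not_le, Fin.lt_def] at hb
      rw [Fin.le_def] at h1
      rcases pathGraph_adj.mp (H.adj_sub hadj) with hpg | hpg
      · have ha : (a : Fin n) = c := Fin.ext (by omega)
        have hb' : (b : Fin n) = d := Fin.ext (by omega)
        have := (Subgraph.coe_adj H a b).mp hadj
        rwa [ha, hb'] at this
      · omega

/-- Every connected subgraph of the path graph is determined by the pair consisting of its
smallest and largest vertex. -/
private lemma path_upper {n : ℕ} :
    coreIndex (pathGraph n) ≤ Nat.card (Sym2 (Fin n)) := by
  classical
  have hmem : ∀ (H : {H : (pathGraph n).Subgraph // H.Connected}),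
      (Set.toFinite H.1.verts).toFinset.Nonempty :=
    fun H => (Set.Finite.toFinset_nonempty _).mpr H.2.nonempty
  set A := fun H : {H : (pathGraph n).Subgraph // H.Connected} =>
    (Set.toFinite H.1.verts).toFinset.min' (hmem H) with hA
  set B := fun H : {H : (pathGraph n).Subgraph // H.Connected} =>
    (Set.toFinite H.1.verts).toFinset.max' (hmem H) with hB
  have hAmem : ∀ H, A H ∈ H.1.verts :=
    fun H => (Set.Finite.mem_toFinset _).mp (Finset.min'_mem _ _)
  have hBmem : ∀ H, B H ∈ H.1.verts :=
    fun H => (Set.Finite.mem_toFinset _).mp (Finset.max'_mem _ _)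
  have hAle : ∀ H, ∀ z ∈ H.1.verts, A H ≤ z :=
    fun H z hz => Finset.min'_le _ _ ((Set.Finite.mem_toFinset _).mpr hz)
  have hleB : ∀ H, ∀ z ∈ H.1.verts, z ≤ B H :=
    fun H z hz => Finset.le_max' _ _ ((Set.Finite.mem_toFinset _).mpr hz)
  have hverts : ∀ H, H.1.verts = Set.Icc (A H) (B H) := by
    intro H
    apply subset_antisymm
    · exact fun z hz => ⟨hAle H z hz, hleB H z hz⟩
    · intro c hc
      exact (H.2.preconnected ⟨_, hAmem H⟩ ⟨_, hBmem H⟩).elim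
        fun p => path_ivt p c hc.1 hc.2
  have hadj : ∀ (H : {H : (pathGraph n).Subgraph // H.Connected}) (c d : Fin n),
      (pathGraph n).Adj c d → c ∈ H.1.verts → d ∈ H.1.verts → H.1.Adj c d := by
    intro H c d hpg hc hd
    rcases pathGraph_adj.mp hpg with hcd | hdc
    · exact (H.2.preconnected ⟨_, hAmem H⟩ ⟨_, hBmem H⟩).elim
        fun p => path_cross p c d hcd (hAle H c hc) (hleB H d hd)
    · exact Subgraph.adj_symm _ ((H.2.preconnected ⟨_, hAmem H⟩ ⟨_, hBmem H⟩).elim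
        fun p => path_cross p d c hdc (hAle H d hd) (hleB H c hc))
  apply Nat.card_le_card_of_injective (fun H => s(A H, B H))
  intro H1 H2 h
  have hAB : ∀ H, A H ≤ B H := fun H => hleB H _ (hAmem H)
  have heq : A H1 = A H2 ∧ B H1 = B H2 := by
    rcases Sym2.eq_iff.mp h with ⟨h1, h2⟩ | ⟨h1, h2⟩
    · exact ⟨h1, h2⟩
    · exact ⟨le_antisymm (le_of_le_of_eq (hAB H1) h2) (le_of_le_of_eq (hAB H2) h1.symm),
        le_antisymm (h2.le.trans (hAB H2)) (h1.ge.trans (hAB H1))⟩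
  have hv : H1.1.verts = H2.1.verts := by
    rw [hverts H1, hverts H2, heq.1, heq.2]
  refine Subtype.ext (Subgraph.ext hv ?_)
  funext c d
  apply propext
  constructor
  · intro hcd
    exact hadj H2 c d (H1.1.adj_sub hcd) (hv ▸ H1.1.edge_vert hcd)
      (hv ▸ H1.1.edge_vert (Subgraph.adj_symm _ hcd))
  · intro hcd
    exact hadj H1 c d (H2.1.adj_sub hcd) (hv ▸ H2.1.edge_vert hcd)
      (hv ▸ H2.1.edge_vert (Subgraph.adj_symm _ hcd))

/-- Mapping subgraphs along a graph homomorphism preserves connectivity. -/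
private lemma subgraph_map_connected {V W : Type*} {G : SimpleGraph V} {G' : SimpleGraph W}
    (f : G →g G') {H : G.Subgraph} (hH : H.Connected) : (H.map f).Connected := by
  rw [Subgraph.connected_iff_forall_exists_walk_subgraph] at hH ⊢
  obtain ⟨⟨v0, hv0⟩, hw⟩ := hH
  refine ⟨⟨f v0, ⟨v0, hv0, rfl⟩⟩, ?_⟩
  rintro u' v' ⟨u, hu, rfl⟩ ⟨v, hv, rfl⟩
  obtain ⟨p, hp⟩ := hw hu hv
  exact ⟨p.map f, by rw [Walk.toSubgraph_map]; exact Subgraph.map_monotone hp⟩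

/-- Mapping subgraphs along an injective graph homomorphism is injective. -/
private lemma subgraph_map_injective {V W : Type*} {G : SimpleGraph V} {G' : SimpleGraph W}
    {f : G →g G'} (hf : Function.Injective f) :
    Function.Injective (SimpleGraph.Subgraph.map f) := by
  have key : ∀ K L : G.Subgraph, K.map f = L.map f → ∀ a b, K.Adj a b → L.Adj a b := by
    intro K L hKL a b hab
    have h1 : (K.map f).Adj (f a) (f b) := ⟨a, b, hab, rfl, rfl⟩
    rw [hKL] at h1
    obtain ⟨a', b', hab', ha, hb⟩ := h1
    rwa [hf ha, hf hb] at hab'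
  intro H1 H2 h
  have hv : H1.verts = H2.verts :=
    Set.image_injective.mpr hf (congrArg Subgraph.verts h)
  refine Subgraph.ext hv ?_
  funext a b
  exact propext ⟨key _ _ h a b, key _ _ h.symm a b⟩

/-- Upper bound by the complete graph. -/
private lemma coreIndex_le_top {V : Type*} [Fintype V] (G : SimpleGraph V) {n : ℕ}
    (hn : Fintype.card V = n) :
    coreIndex G ≤ coreIndex (⊤ : SimpleGraph (Fin n)) := by
  classical
  let e := Fintype.equivFinOfCardEq hn
  let f : G →g (⊤ : SimpleGraph (Fin n)) :=
    ⟨e, fun {a b} h => by simp [e.injective.ne (G.ne_of_adj h)]⟩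
  apply Nat.card_le_card_of_injective
    (fun H : {H : G.Subgraph // H.Connected} =>
      (⟨H.1.map f, subgraph_map_connected f H.2⟩ :
        {H : (⊤ : SimpleGraph (Fin n)).Subgraph // H.Connected}))
  intro H1 H2 h
  exact Subtype.ext (subgraph_map_injective (f := f) e.injective
    (congrArg Subtype.val h))

private noncomputable def Sfin {V : Type*} [Fintype V] {G : SimpleGraph V}
    (H : G.Subgraph) : Finset V :=
  (Set.toFinite H.verts).toFinset

private lemma mem_Sfin {V : Type*} [Fintype V] {G : SimpleGraph V} {H : G.Subgraph} {a : V} :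
    a ∈ Sfin H ↔ a ∈ H.verts := Set.Finite.mem_toFinset _

private noncomputable def embd {V : Type*} [Fintype V] {G : SimpleGraph V} (H : G.Subgraph) :
    ↥H.verts ≃ Fin (Sfin H).card :=
  (Equiv.subtypeEquivRight (fun _ => mem_Sfin.symm)).trans (Sfin H).equivFin

private lemma embd_val {V : Type*} [Fintype V] {G : SimpleGraph V} (H : G.Subgraph)
    (x : ↥H.verts) (hx : (x : V) ∈ Sfin H) :
    embd H x = (Sfin H).equivFin ⟨(x : V), hx⟩ := rfl

/-- Transfer of a subgraph to an abstract graph on `Fin` of the number of its vertices. -/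
private noncomputable def grd {V : Type*} [Fintype V] {G : SimpleGraph V} (H : G.Subgraph) :
    SimpleGraph (Fin (Sfin H).card) :=
  SimpleGraph.map (embd H).toEmbedding H.coe

private lemma grd_connected {V : Type*} [Fintype V] {G : SimpleGraph V} {H : G.Subgraph}
    (hH : H.Connected) : (grd H).Connected := by
  refine Connected.map (⟨fun z => embd H z, fun {a b} hab => ?_⟩ : H.coe →g grd H)
    (fun i => ⟨(embd H).symm i, (embd H).apply_symm_apply i⟩) hH.coe
  exact (SimpleGraph.map_adj _ _ _ _).mpr ⟨a, b, hab, rfl, rfl⟩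

private lemma grd_decode {V : Type*} [Fintype V] {G : SimpleGraph V} (H : G.Subgraph)
    (a b : V) :
    H.Adj a b ↔ ∃ (ha : a ∈ Sfin H) (hb : b ∈ Sfin H),
      (grd H).Adj ((Sfin H).equivFin ⟨a, ha⟩) ((Sfin H).equivFin ⟨b, hb⟩) := by
  constructor
  · intro hab
    have ha' : a ∈ H.verts := H.edge_vert hab
    have hb' : b ∈ H.verts := H.edge_vert (Subgraph.adj_symm _ hab)
    refine ⟨mem_Sfin.mpr ha', mem_Sfin.mpr hb', ?_⟩
    exact (SimpleGraph.map_adj _ _ _ _).mpr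
      ⟨⟨a, ha'⟩, ⟨b, hb'⟩, hab, embd_val H _ _, embd_val H _ _⟩
  · rintro ⟨ha, hb, hadj⟩
    obtain ⟨x, y, hxy, hxe, hye⟩ := (SimpleGraph.map_adj _ _ _ _).mp hadj
    simp only [Equiv.coe_toEmbedding] at hxe hye
    rw [embd_val H x (mem_Sfin.mpr x.2)] at hxe
    rw [embd_val H y (mem_Sfin.mpr y.2)] at hye
    have hx : (x : V) = a := congrArg Subtype.val ((Sfin H).equivFin.injective hxe)
    have hy : (y : V) = b := congrArg Subtype.val ((Sfin H).equivFin.injective hye)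
    rw [← hx, ← hy]
    exact hxy

/-- Upper bound by the total count of connected labeled graphs on subsets. -/
private lemma coreIndex_le_sum {V : Type*} [Fintype V] (G : SimpleGraph V) {n : ℕ}
    (hn : Fintype.card V = n) :
    coreIndex G ≤ ∑ i ∈ Finset.Icc 1 n, n.choose i * numConnectedGraphs i := by
  classical
  have key : coreIndex G ≤
      Nat.card (Σ s : Finset V, {g : SimpleGraph (Fin s.card) // g.Connected}) := by
    apply Nat.card_le_card_of_injective
      (fun H : {H : G.Subgraph // H.Connected} =>
        (⟨Sfin H.1, ⟨grd H.1, grd_connected H.2⟩⟩ :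
          Σ s : Finset V, {g : SimpleGraph (Fin s.card) // g.Connected}))
    have decode : ∀ (H : G.Subgraph) (hH : H.Connected),
        (fun x : Σ s : Finset V, {g : SimpleGraph (Fin s.card) // g.Connected} =>
          ((↑x.1 : Set V), fun a b => ∃ (ha : a ∈ x.1) (hb : b ∈ x.1),
            x.2.1.Adj (x.1.equivFin ⟨a, ha⟩) (x.1.equivFin ⟨b, hb⟩)))
          ⟨Sfin H, ⟨grd H, grd_connected hH⟩⟩ = (H.verts, H.Adj) := by
      intro H hH
      refine Prod.ext (Set.Finite.coe_toFinset _) ?_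
      funext a b
      exact propext (grd_decode H a b).symm
    intro H1 H2 h
    have h2 := congrArg
      (fun x : Σ s : Finset V, {g : SimpleGraph (Fin s.card) // g.Connected} =>
        ((↑x.1 : Set V), fun a b => ∃ (ha : a ∈ x.1) (hb : b ∈ x.1),
          x.2.1.Adj (x.1.equivFin ⟨a, ha⟩) (x.1.equivFin ⟨b, hb⟩))) h
    replace h2 := (decode H1.1 H1.2).symm.trans (h2.trans (decode H2.1 H2.2))
    exact Subtype.ext (Subgraph.ext (congrArg Prod.fst h2) (congrArg Prod.snd h2))
  refine key.trans (le_of_eq ?_)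
  haveI inst : ∀ s : Finset V, Fintype {g : SimpleGraph (Fin s.card) // g.Connected} :=
    fun s => Fintype.ofFinite _
  rw [Nat.card_eq_fintype_card, Fintype.card_sigma]
  have hfib : ∀ s : Finset V,
      Fintype.card {g : SimpleGraph (Fin s.card) // g.Connected} =
        numConnectedGraphs s.card :=
    fun s => Nat.card_eq_fintype_card.symm
  rw [Finset.sum_congr rfl (fun s _ => hfib s)]
  have h0 : numConnectedGraphs 0 = 0 := by
    have : IsEmpty {g : SimpleGraph (Fin 0) // g.Connected} :=
      ⟨fun g => g.2.nonempty.elim fun i => i.elim0⟩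
    exact Nat.card_of_isEmpty
  calc ∑ s : Finset V, numConnectedGraphs s.card
      = ∑ s ∈ (Finset.univ : Finset V).powerset, numConnectedGraphs s.card := by
        rw [Finset.powerset_univ]
    _ = ∑ m ∈ Finset.range (n + 1), n.choose m * numConnectedGraphs m := by
        rw [Finset.sum_powerset_apply_card]
        simp [Finset.card_univ, hn, smul_eq_mul]
    _ = ∑ i ∈ Finset.Icc 1 n, n.choose i * numConnectedGraphs i := by
        have hins : Finset.range (n + 1) = insert 0 (Finset.Icc 1 n) := by
          ext m
          simp only [Finset.mem_range, Finset.mem_insert, Finset.mem_Icc]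
          omega
        rw [hins, Finset.sum_insert (by simp), h0]
        simp

end Auxiliary

/-- Among all connected graphs on `n` vertices, the core index is maximized by the
complete graph `K_n` and minimized by the path `P_n`; moreover
`n(n+1)/2 ≤ F(G) ≤ ∑_{i=1}^{n} C(n,i) h_i`. -/
theorem connected_coreIndex_bounds {V : Type*} [Fintype V] (G : SimpleGraph V) (n : ℕ)
    (hn : Fintype.card V = n) (hG : G.Connected) :
    coreIndex (pathGraph n) ≤ coreIndex G ∧
    coreIndex G ≤ coreIndex (⊤ : SimpleGraph (Fin n)) ∧
    n * (n + 1) / 2 ≤ coreIndex G ∧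
    coreIndex G ≤ ∑ i ∈ Finset.Icc 1 n, n.choose i * numConnectedGraphs i := by
  have hsymV : Nat.card (Sym2 V) = n * (n + 1) / 2 := by
    rw [Nat.card_eq_fintype_card, Sym2.card, hn, Nat.choose_two_right,
      Nat.add_sub_cancel, Nat.mul_comm]
  have hsymF : Nat.card (Sym2 (Fin n)) = n * (n + 1) / 2 := by
    rw [Nat.card_eq_fintype_card, Sym2.card, Fintype.card_fin, Nat.choose_two_right,
      Nat.add_sub_cancel, Nat.mul_comm]
  have hlow : n * (n + 1) / 2 ≤ coreIndex G := hsymV ▸ lower_bound hG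
  refine ⟨?_, coreIndex_le_top G hn, hlow, coreIndex_le_sum G hn⟩
  calc coreIndex (pathGraph n) ≤ Nat.card (Sym2 (Fin n)) := path_upper
    _ = n * (n + 1) / 2 := hsymF
    _ ≤ coreIndex G := hlow
end

section
/- For integers 2 ≤ l ≤ m, F(K_l ∪ K_m) < F(K_{l-1} ∪ K_{m+1}), where the union denotes disjoint union. -/
open SimpleGraph

namespace CoreAux
variable {V W : Type*} {G : SimpleGraph V} {G' : SimpleGraph W}

lemma map_adj_iff (f : G ↪g G') (H : G.Subgraph) {a b : V} :
    (H.map f.toHom).Adj (f a) (f b) ↔ H.Adj a b := by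
  constructor
  · rintro ⟨u, v, h, hu, hv⟩
    rwa [f.injective hu, f.injective hv] at h
  · intro h; exact ⟨a, b, h, rfl, rfl⟩

/-- iso between a subgraph and its image under an embedding -/
noncomputable def isoMap (f : G ↪g G') (H : G.Subgraph) : H.coe ≃g (H.map f.toHom).coe where
  toEquiv := Equiv.Set.image f H.verts f.injective
  map_rel_iff' := by
    rintro ⟨a, ha⟩ ⟨b, hb⟩
    simp only [Equiv.Set.image, Equiv.Set.imageOfInjOn, Equiv.coe_fn_mk, Subgraph.coe_adj]
    exact map_adj_iff f H

lemma connected_map_iff (f : G ↪g G') (H : G.Subgraph) :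
    (H.map f.toHom).Connected ↔ H.Connected := by
  rw [Subgraph.connected_iff', Subgraph.connected_iff', (isoMap f H).connected_iff]

lemma comap_map_eq (f : G ↪g G') (H : G.Subgraph) : (H.map f.toHom).comap f.toHom = H := by
  ext a b
  · simp [f.injective.preimage_image]
  · constructor
    · rintro ⟨-, h2⟩
      exact (map_adj_iff f H).mp h2
    · intro h
      exact ⟨H.adj_sub h, (map_adj_iff f H).mpr h⟩

lemma map_inj (f : G ↪g G') : Function.Injective (Subgraph.map f.toHom) := fun H1 H2 h => by
  rw [← comap_map_eq f H1, h, comap_map_eq]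

lemma map_comap_eq (f : G ↪g G') (H' : G'.Subgraph) (h : H'.verts ⊆ Set.range f) :
    (H'.comap f.toHom).map f.toHom = H' := by
  ext x y
  · simp only [Subgraph.map_verts, Subgraph.comap_verts]
    rw [Set.image_preimage_eq_of_subset (by exact_mod_cast h)]
  · constructor
    · rintro ⟨a, b, ⟨_, hab⟩, rfl, rfl⟩; exact hab
    · intro hxy
      obtain ⟨a, rfl⟩ := h (H'.edge_vert hxy)
      obtain ⟨b, rfl⟩ := h (H'.edge_vert hxy.symm)
      exact ⟨a, b, ⟨f.map_rel_iff.mp (H'.adj_sub hxy), hxy⟩, rfl, rfl⟩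

lemma verts_side {H : (G ⊕g G').Subgraph} (hH : H.Connected) :
    H.verts ⊆ Set.range Sum.inl ∨ H.verts ⊆ Set.range Sum.inr := by
  obtain ⟨v0, hv0⟩ := hH.nonempty
  have key : ∀ (a b : H.verts), H.coe.Reachable a b → (a : V ⊕ W).isLeft = (b : V ⊕ W).isLeft := by
    intro a b hr
    obtain ⟨p⟩ := hr
    induction p with
    | nil => rfl
    | @cons u v w h p ih =>
      have h2 := H.adj_sub h
      have : (u : V ⊕ W).isLeft = (v : V ⊕ W).isLeft := by
        rcases hu' : (u : V ⊕ W) with x | x <;> rcases hv' : (v : V ⊕ W) with y | y <;>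
          rw [hu', hv'] at h2 <;> simp_all
      rw [this]; exact ih
  obtain x | x := v0
  · left
    intro w hw
    have h3 := key ⟨_, hv0⟩ ⟨w, hw⟩ (hH.preconnected _ _)
    obtain ⟨y, hy⟩ := Sum.isLeft_iff.mp (by simpa using h3.symm)
    exact ⟨y, hy.symm⟩
  · right
    intro w hw
    have h3 := key ⟨_, hv0⟩ ⟨w, hw⟩ (hH.preconnected _ _)
    have h4 : ¬ (w).isLeft := by simp [← h3]
    obtain ⟨y, hy⟩ := Sum.isRight_iff.mp (Sum.not_isLeft.mp h4)
    exact ⟨y, hy.symm⟩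

lemma subgraph_finite [Finite V] : Finite G.Subgraph := by
  have hf : Function.Injective (fun H : G.Subgraph => (H.verts, H.Adj)) := by
    intro a b h
    exact Subgraph.ext (congrArg Prod.fst h) (congrArg Prod.snd h)
  exact Finite.of_injective _ hf


section Main

variable (l m : ℕ)

/-- source graph -/
abbrev SrcG := (⊤ : SimpleGraph (Fin l)) ⊕g (⊤ : SimpleGraph (Fin m))
/-- target graph -/
abbrev TgtG := (⊤ : SimpleGraph (Fin (l - 1))) ⊕g (⊤ : SimpleGraph (Fin (m + 1)))

/-- the distinguished last vertex of `Fin l` -/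
def lastL (hl : 2 ≤ l) : Fin l := ⟨l - 1, by omega⟩

/-- embedding of `Fin l` into `Fin (m+1)` sending `l-1` to `m` -/
def e2 (hl : 2 ≤ l) (hlm : l ≤ m) : Fin l ↪ Fin (m + 1) where
  toFun i := if i.val = l - 1 then Fin.last m else ⟨i.val, by have := i.2; omega⟩
  inj' := by
    intro a b h
    have ha := a.2; have hb := b.2
    simp only at h
    split_ifs at h with h1 h2 h2
    · exact Fin.ext (h1.trans h2.symm)
    · have := congrArg Fin.val h; simp [Fin.last] at this; omega
    · have := congrArg Fin.val h; simp [Fin.last] at this; omega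
    · have := congrArg Fin.val h; simp at this; exact Fin.ext this

lemma e2_lastL (hl : 2 ≤ l) (hlm : l ≤ m) : e2 l m hl hlm (lastL l hl) = Fin.last m := by
  simp [e2, lastL]
  exact if_pos rfl

lemma e2_val_ne (hl : 2 ≤ l) (hlm : l ≤ m) (i : Fin l) :
    ((e2 l m hl hlm i : Fin (m + 1)) : ℕ) ≠ l - 1 := by
  have hi := i.2
  simp only [e2, Function.Embedding.coeFn_mk]
  change ((if i.val = l - 1 then Fin.last m else ⟨i.val, by have := i.2; omega⟩ : Fin (m + 1)) : ℕ) ≠ l - 1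
  split_ifs with h
  · simp [Fin.last]; omega
  · simpa using by omega

variable (hl : 2 ≤ l) (hlm : l ≤ m)

/-- embedding of the left complete graph into the source -/
def fL : (⊤ : SimpleGraph (Fin l)) ↪g SrcG l m := Embedding.sumInl
def fR : (⊤ : SimpleGraph (Fin m)) ↪g SrcG l m := Embedding.sumInr
def fA : (⊤ : SimpleGraph (Fin (l - 1))) ↪g (⊤ : SimpleGraph (Fin l)) :=
  Embedding.completeGraph (Fin.castLEEmb (Nat.sub_le l 1))
def gB : (⊤ : SimpleGraph (Fin l)) ↪g TgtG l m :=
  Embedding.sumInr.comp (Embedding.completeGraph (e2 l m hl hlm))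
def gA : (⊤ : SimpleGraph (Fin (l - 1))) ↪g TgtG l m := Embedding.sumInl
def gR : (⊤ : SimpleGraph (Fin m)) ↪g TgtG l m :=
  Embedding.sumInr.comp (Embedding.completeGraph Fin.castSuccEmb)

open Classical in
/-- the injection on subgraphs -/
noncomputable def phi (H : (SrcG l m).Subgraph) : (TgtG l m).Subgraph :=
  if Sum.inl (lastL l hl) ∈ H.verts then
    (H.comap (fL l m).toHom).map (gB l m hl hlm).toHom
  else if H.verts ⊆ Set.range Sum.inl then
    ((H.comap (fL l m).toHom).comap (fA l).toHom).map (gA l m).toHom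
  else
    (H.comap (fR l m).toHom).map (gR l m).toHom


variable {H H1 H2 : (SrcG l m).Subgraph}

lemma caseB_sub (hH : H.Connected) (hB : Sum.inl (lastL l hl) ∈ H.verts) :
    H.verts ⊆ Set.range Sum.inl := by
  rcases verts_side hH with h | h
  · exact h
  · obtain ⟨y, hy⟩ := h hB
    exact absurd hy (by simp)

lemma caseA_sub (hA : H.verts ⊆ Set.range Sum.inl) (hB : Sum.inl (lastL l hl) ∉ H.verts) :
    (H.comap (fL l m).toHom).verts ⊆ Set.range (Fin.castLE (Nat.sub_le l 1)) := by
  intro v hv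
  have hv' : Sum.inl v ∈ H.verts := hv
  have hne : v ≠ lastL l hl := fun h => hB (h ▸ hv')
  have hv2 := v.2
  have hlt : v.val < l - 1 := by
    have : v.val ≠ l - 1 := fun h => hne (Fin.ext h)
    omega
  exact ⟨⟨v.val, hlt⟩, Fin.ext rfl⟩

lemma caseR_sub (hH : H.Connected) (hA : ¬ H.verts ⊆ Set.range Sum.inl) :
    H.verts ⊆ Set.range Sum.inr := (verts_side hH).resolve_left hA

lemma phi_connected (hH : H.Connected) : (phi l m hl hlm H).Connected := by
  unfold phi
  split_ifs with hB hA
  · rw [connected_map_iff, ← connected_map_iff (fL l m),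
      map_comap_eq (fL l m) H (caseB_sub l m hl hH hB)]
    exact hH
  · rw [connected_map_iff, ← connected_map_iff (fA l),
      map_comap_eq (fA l) _ (caseA_sub l m hl hA hB), ← connected_map_iff (fL l m),
      map_comap_eq (fL l m) H hA]
    exact hH
  · rw [connected_map_iff, ← connected_map_iff (fR l m),
      map_comap_eq (fR l m) H (caseR_sub l m hH hA)]
    exact hH

lemma gB_apply (x : Fin l) : (gB l m hl hlm).toHom x = Sum.inr (e2 l m hl hlm x) := rfl
lemma gA_apply (x : Fin (l - 1)) : (gA l m).toHom x = (Sum.inl x : Fin (l-1) ⊕ Fin (m+1)) := rfl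
lemma gR_apply (x : Fin m) : (gR l m).toHom x = Sum.inr (Fin.castSucc x) := rfl

lemma phiB_mem (hB : Sum.inl (lastL l hl) ∈ H.verts) :
    Sum.inr (Fin.last m) ∈ (phi l m hl hlm H).verts := by
  unfold phi
  rw [if_pos hB]
  exact ⟨lastL l hl, hB, by rw [gB_apply, e2_lastL]⟩

lemma phiB_nsubl (hB : Sum.inl (lastL l hl) ∈ H.verts) :
    ¬ (phi l m hl hlm H).verts ⊆ Set.range Sum.inl := by
  intro hsub
  obtain ⟨y, hy⟩ := hsub (phiB_mem l m hl hlm hB)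
  exact absurd hy (by simp)

lemma phiA_subl (hB : Sum.inl (lastL l hl) ∉ H.verts) (hA : H.verts ⊆ Set.range Sum.inl) :
    (phi l m hl hlm H).verts ⊆ Set.range Sum.inl := by
  unfold phi
  rw [if_neg hB, if_pos hA]
  rintro v ⟨x, _, rfl⟩
  exact ⟨x, rfl⟩

lemma phiR_nmem (hB : Sum.inl (lastL l hl) ∉ H.verts) (hA : ¬ H.verts ⊆ Set.range Sum.inl) :
    Sum.inr (Fin.last m) ∉ (phi l m hl hlm H).verts := by
  unfold phi
  rw [if_neg hB, if_neg hA]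
  rintro ⟨x, _, hx2⟩
  rw [gR_apply] at hx2
  have : Fin.castSucc x = Fin.last m := by simpa using hx2
  exact absurd this (Fin.castSucc_lt_last x).ne

lemma phiR_nsubl (hH : H.Connected) (hB : Sum.inl (lastL l hl) ∉ H.verts)
    (hA : ¬ H.verts ⊆ Set.range Sum.inl) :
    ¬ (phi l m hl hlm H).verts ⊆ Set.range Sum.inl := by
  obtain ⟨v0, hv0⟩ := hH.nonempty
  obtain ⟨x, rfl⟩ := caseR_sub l m hH hA hv0
  intro hsub
  have hmem : Sum.inr (Fin.castSucc x) ∈ (phi l m hl hlm H).verts := by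
    unfold phi
    rw [if_neg hB, if_neg hA]
    exact ⟨x, hv0, rfl⟩
  obtain ⟨y, hy⟩ := hsub hmem
  exact absurd hy (by simp)

lemma phi_inj (h1 : H1.Connected) (h2 : H2.Connected)
    (heq : phi l m hl hlm H1 = phi l m hl hlm H2) : H1 = H2 := by
  by_cases hB1 : Sum.inl (lastL l hl) ∈ H1.verts <;>
    by_cases hB2 : Sum.inl (lastL l hl) ∈ H2.verts
  · -- both case B
    have e : (H1.comap (fL l m).toHom).map (gB l m hl hlm).toHom
        = (H2.comap (fL l m).toHom).map (gB l m hl hlm).toHom := by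
      unfold phi at heq
      rwa [if_pos hB1, if_pos hB2] at heq
    have e2 := map_inj (gB l m hl hlm) e
    have e3 := congrArg (Subgraph.map (fL l m).toHom) e2
    rwa [map_comap_eq _ _ (caseB_sub l m hl h1 hB1),
      map_comap_eq _ _ (caseB_sub l m hl h2 hB2)] at e3
  · exfalso
    have hmem := phiB_mem l m hl hlm hB1
    rw [heq] at hmem
    by_cases hA2 : H2.verts ⊆ Set.range Sum.inl
    · obtain ⟨y, hy⟩ := phiA_subl l m hl hlm hB2 hA2 hmem
      exact absurd hy (by simp)
    · exact phiR_nmem l m hl hlm hB2 hA2 hmem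
  · exfalso
    have hmem := phiB_mem l m hl hlm hB2
    rw [← heq] at hmem
    by_cases hA1 : H1.verts ⊆ Set.range Sum.inl
    · obtain ⟨y, hy⟩ := phiA_subl l m hl hlm hB1 hA1 hmem
      exact absurd hy (by simp)
    · exact phiR_nmem l m hl hlm hB1 hA1 hmem
  · by_cases hA1 : H1.verts ⊆ Set.range Sum.inl <;>
      by_cases hA2 : H2.verts ⊆ Set.range Sum.inl
    · -- both case A
      have e : ((H1.comap (fL l m).toHom).comap (fA l).toHom).map (gA l m).toHom
          = ((H2.comap (fL l m).toHom).comap (fA l).toHom).map (gA l m).toHom := by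
        unfold phi at heq
        rwa [if_neg hB1, if_pos hA1, if_neg hB2, if_pos hA2] at heq
      have e2 := map_inj (gA l m) e
      have e3 := congrArg (Subgraph.map (fA l).toHom) e2
      rw [map_comap_eq _ _ (caseA_sub l m hl hA1 hB1),
        map_comap_eq _ _ (caseA_sub l m hl hA2 hB2)] at e3
      have e4 := congrArg (Subgraph.map (fL l m).toHom) e3
      rwa [map_comap_eq _ _ hA1, map_comap_eq _ _ hA2] at e4
    · exact absurd ((heq ▸ phiA_subl l m hl hlm hB1 hA1 : (phi l m hl hlm H2).verts ⊆ _))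
        (phiR_nsubl l m hl hlm h2 hB2 hA2)
    · exact absurd ((heq ▸ phiA_subl l m hl hlm hB2 hA2 : (phi l m hl hlm H1).verts ⊆ _))
        (phiR_nsubl l m hl hlm h1 hB1 hA1)
    · -- both case R
      have e : (H1.comap (fR l m).toHom).map (gR l m).toHom
          = (H2.comap (fR l m).toHom).map (gR l m).toHom := by
        unfold phi at heq
        rwa [if_neg hB1, if_neg hA1, if_neg hB2, if_neg hA2] at heq
      have e2 := map_inj (gR l m) e
      have e3 := congrArg (Subgraph.map (fR l m).toHom) e2
      rwa [map_comap_eq _ _ (caseR_sub l m h1 hA1),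
        map_comap_eq _ _ (caseR_sub l m h2 hA2)] at e3


/-- witness subgraph of the target not in the range of `phi` -/
def Wsub : (TgtG l m).Subgraph :=
  (⊤ : (TgtG l m).Subgraph).induce
    {Sum.inr ⟨l - 1, by omega⟩, Sum.inr (Fin.last m)}

lemma Wsub_connected : (Wsub l m hl hlm).Connected := by
  apply Subgraph.top_induce_pair_connected_of_adj
  have : l - 1 ≠ m := by omega
  simp [Fin.ext_iff, Fin.last, this]

lemma phi_ne_W (hH : H.Connected) : phi l m hl hlm H ≠ Wsub l m hl hlm := by
  intro heq
  have haW : (Sum.inr (⟨l - 1, by omega⟩ : Fin (m + 1)) : Fin (l-1) ⊕ Fin (m+1))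
      ∈ (phi l m hl hlm H).verts := by
    rw [heq]
    exact Set.mem_insert _ _
  have hbW : (Sum.inr (Fin.last m) : Fin (l-1) ⊕ Fin (m+1)) ∈ (phi l m hl hlm H).verts := by
    rw [heq]
    exact Set.mem_insert_of_mem _ rfl
  revert haW hbW
  unfold phi
  split_ifs with hB hA
  · rintro ⟨x, _, hx2⟩ -
    rw [gB_apply] at hx2
    have : ((e2 l m hl hlm x : Fin (m + 1)) : ℕ) = l - 1 := by
      have := (Sum.inr.inj hx2)
      exact congrArg Fin.val this
    exact e2_val_ne l m hl hlm x this
  · rintro ⟨x, _, hx2⟩ -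
    exact absurd hx2 (by simp [gA_apply])
  · rintro - ⟨x, _, hx2⟩
    rw [gR_apply] at hx2
    have : Fin.castSucc x = Fin.last m := Sum.inr.inj hx2
    exact absurd this (Fin.castSucc_lt_last x).ne

end Main
end CoreAux


open CoreAux

/-- For `2 ≤ l ≤ m`, `F(K_l ∪ K_m) < F(K_{l-1} ∪ K_{m+1})`, where `∪` is disjoint
union. -/
theorem coreIndex_complete_union_lt (l m : ℕ) (hl : 2 ≤ l) (hlm : l ≤ m) :
    coreIndex ((⊤ : SimpleGraph (Fin l)) ⊕g (⊤ : SimpleGraph (Fin m))) <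
    coreIndex ((⊤ : SimpleGraph (Fin (l - 1))) ⊕g (⊤ : SimpleGraph (Fin (m + 1)))) := by
  classical
  haveI : Finite ((TgtG l m).Subgraph) := subgraph_finite
  haveI : Finite {K : (TgtG l m).Subgraph // K.Connected} := Subtype.finite
  let Φ : {K : (SrcG l m).Subgraph // K.Connected} → {K : (TgtG l m).Subgraph // K.Connected} :=
    fun K => ⟨phi l m hl hlm K.1, phi_connected l m hl hlm K.2⟩
  have hinj : Function.Injective Φ := fun a b h =>
    Subtype.ext (phi_inj l m hl hlm a.2 b.2 (congrArg Subtype.val h))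
  haveI : Fintype {K : (TgtG l m).Subgraph // K.Connected} := Fintype.ofFinite _
  haveI : Fintype {K : (SrcG l m).Subgraph // K.Connected} := Fintype.ofInjective Φ hinj
  rw [coreIndex, coreIndex, Nat.card_eq_fintype_card, Nat.card_eq_fintype_card]
  exact Fintype.card_lt_of_injective_of_notMem Φ hinj
    (b := ⟨Wsub l m hl hlm, Wsub_connected l m hl hlm⟩)
    (by
      rintro ⟨⟨K, hK⟩, hEq⟩
      exact phi_ne_W l m hl hlm hK (congrArg Subtype.val hEq))
end

section
/- If G is an acyclic graph on n vertices with k connected components, then F(G) ≤ 2^{n-k} + n - 1, with equality if and only if G is the disjoint union of k-1 isolated vertices and the star K_{1,n-k}. -/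
open SimpleGraph

/-- The star `K_{1,m}` on `m + 1` vertices: vertex `0` is the center. -/
def starGraph (m : ℕ) : SimpleGraph (Fin (m + 1)) :=
  SimpleGraph.fromRel (fun i _ => i = 0)

namespace CoreAux

open SimpleGraph.Walk

variable {V : Type*} {G : SimpleGraph V}

instance [Finite V] : Finite G.Subgraph :=
  Finite.of_injective (fun H : G.Subgraph => (H.verts, H.Adj)) (by
    intro H1 H2 h
    simp only [Prod.mk.injEq] at h
    exact SimpleGraph.Subgraph.ext h.1 h.2)

lemma exists_adj_of_connected {H : G.Subgraph} (hH : H.Connected) {v x : V}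
    (hv : v ∈ H.verts) (hx : x ∈ H.verts) (hne : v ≠ x) : ∃ w, H.Adj v w := by
  obtain ⟨p⟩ := hH ⟨v, hv⟩ ⟨x, hx⟩
  cases p with
  | nil => exact absurd rfl hne
  | cons h q => exact ⟨_, (Subgraph.coe_adj _ _ _).mp h⟩

lemma eq_singleton_of_edgeless {H : G.Subgraph} (hH : H.Connected)
    (he : H.edgeSet = ∅) : ∃ v, H = G.singletonSubgraph v := by
  obtain ⟨v, hv⟩ := hH.nonempty
  refine ⟨v, (SimpleGraph.eq_singletonSubgraph_iff_verts_eq H).mpr ?_⟩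
  apply Set.eq_singleton_iff_unique_mem.mpr ⟨hv, fun x hx => ?_⟩
  by_contra hne
  obtain ⟨w, hw⟩ := exists_adj_of_connected hH hx hv hne
  exact absurd (Subgraph.mem_edgeSet.mpr hw) (by simp [he])

lemma verts_eq_of_edge {H : G.Subgraph} (hH : H.Connected) (he : H.edgeSet.Nonempty) :
    H.verts = {v | ∃ e ∈ H.edgeSet, v ∈ e} := by
  obtain ⟨e₀, he₀⟩ := he
  ext v
  constructor
  · intro hv
    induction e₀ with
    | h x y =>
      have hxy : H.Adj x y := Subgraph.mem_edgeSet.mp he₀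
      by_cases hvx : v = x
      · exact ⟨s(x, y), he₀, by simp [hvx]⟩
      · obtain ⟨w, hw⟩ := exists_adj_of_connected hH hv (H.edge_vert hxy) hvx
        exact ⟨s(v, w), Subgraph.mem_edgeSet.mpr hw, by simp⟩
  · rintro ⟨e, he, hve⟩
    induction e with
    | h x y =>
      have hxy : H.Adj x y := Subgraph.mem_edgeSet.mp he
      rcases Sym2.mem_iff.mp hve with rfl | rfl
      · exact H.edge_vert hxy
      · exact H.edge_vert hxy.symm

/-- The subgraph spanned by a set of edges. -/
def fromEdges (G : SimpleGraph V) (s : Set (Sym2 V)) (hs : s ⊆ G.edgeSet) : G.Subgraph where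
  verts := {v | ∃ e ∈ s, v ∈ e}
  Adj u v := s(u, v) ∈ s
  adj_sub h := (SimpleGraph.mem_edgeSet G).mp (hs h)
  edge_vert h := ⟨_, h, Sym2.mem_mk_left _ _⟩
  symm := ⟨fun u v h => by show s(v, u) ∈ s; rw [Sym2.eq_swap]; exact h⟩

@[simp] lemma fromEdges_edgeSet (s : Set (Sym2 V)) (hs : s ⊆ G.edgeSet) :
    (fromEdges G s hs).edgeSet = s := by
  ext e
  induction e with
  | h x y => exact Subgraph.mem_edgeSet

lemma eq_fromEdges {H : G.Subgraph} (hH : H.Connected) (he : H.edgeSet.Nonempty) :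
    H = fromEdges G H.edgeSet H.edgeSet_subset := by
  apply SimpleGraph.Subgraph.ext
  · rw [verts_eq_of_edge hH he]; rfl
  · ext u v
    exact (Subgraph.mem_edgeSet (G' := H)).symm

lemma fromEdges_connected {s : Set (Sym2 V)} (hs : s ⊆ G.edgeSet) (hne : s.Nonempty)
    {a : V} (ha : ∀ e ∈ s, a ∈ e) : (fromEdges G s hs).Connected := by
  rw [Subgraph.connected_iff]
  have hav : a ∈ (fromEdges G s hs).verts := ⟨hne.choose, hne.choose_spec, ha _ hne.choose_spec⟩
  refine ⟨⟨?_⟩, ⟨a, hav⟩⟩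
  have key : ∀ w : (fromEdges G s hs).verts, (fromEdges G s hs).coe.Reachable w ⟨a, hav⟩ := by
    rintro ⟨w, e, hes, hwe⟩
    by_cases hwa : w = a
    · subst hwa; rfl
    · have : (fromEdges G s hs).Adj w a := by
        have hae := ha e hes
        induction e with
        | h x y =>
          rcases Sym2.mem_iff.mp hwe with rfl | rfl <;>
            rcases Sym2.mem_iff.mp hae with rfl | rfl <;>
            first
            | exact absurd rfl hwa
            | exact hes
            | (show s(w, a) ∈ s; rw [Sym2.eq_swap]; exact hes)
      exact SimpleGraph.Adj.reachable (by exact this)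
  intro u v
  exact (key u).trans (key v).symm

lemma eq_singleton_mem {H : G.Subgraph} (hH : H.Connected) (he : ¬ H.edgeSet.Nonempty)
    {w : V} (hw : w ∈ H.verts) : H = G.singletonSubgraph w := by
  obtain ⟨v, hv⟩ := eq_singleton_of_edgeless hH (Set.not_nonempty_iff_eq_empty.mp he)
  subst hv
  rw [singletonSubgraph_verts, Set.mem_singleton_iff] at hw
  rw [hw]

lemma eq_singleton_choose {H : G.Subgraph} (hH : H.Connected) (he : ¬ H.edgeSet.Nonempty) :
    H = G.singletonSubgraph hH.nonempty.choose :=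
  eq_singleton_mem hH he hH.nonempty.choose_spec

open scoped Classical in
/-- Encoding of connected subgraphs. -/
noncomputable def encode (G : SimpleGraph V) :
    {H : G.Subgraph // H.Connected} ⊕ Unit → V ⊕ Set G.edgeSet :=
  fun x => match x with
  | Sum.inr _ => Sum.inr ∅
  | Sum.inl ⟨H, hH⟩ =>
    if _ : H.edgeSet.Nonempty then Sum.inr {e : G.edgeSet | (e : Sym2 V) ∈ H.edgeSet}
    else Sum.inl hH.nonempty.choose

lemma encode_injective : Function.Injective (encode G) := by
  have decode : ∀ (H : G.Subgraph) (hH : H.Connected) (s : Set G.edgeSet),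
      {e : G.edgeSet | (e : Sym2 V) ∈ H.edgeSet} = s → H.edgeSet = Subtype.val '' s := by
    intro H hH s hs
    ext e
    constructor
    · intro he
      exact ⟨⟨e, H.edgeSet_subset he⟩, by rw [← hs]; exact he, rfl⟩
    · rintro ⟨e', he', rfl⟩
      rw [← hs] at he'
      exact he'
  rintro (⟨H1, h1⟩ | ⟨⟩) (⟨H2, h2⟩ | ⟨⟩) h
  · simp only [encode] at h
    by_cases e1 : H1.edgeSet.Nonempty <;> by_cases e2 : H2.edgeSet.Nonempty
    · rw [dif_pos e1, dif_pos e2] at h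
      simp only [Sum.inr.injEq] at h
      have d1 := decode H1 h1 _ h
      have d2 := decode H2 h2 _ rfl
      rw [← d1] at d2
      have : H1 = H2 := by
        rw [eq_fromEdges h1 e1, eq_fromEdges h2 e2]
        congr 1
        exact d2.symm
      simp [this]
    · rw [dif_pos e1, dif_neg e2] at h
      exact absurd h (by simp)
    · rw [dif_neg e1, dif_pos e2] at h
      exact absurd h (by simp)
    · rw [dif_neg e1, dif_neg e2] at h
      simp only [Sum.inl.injEq] at h
      have e : H1 = H2 := by
        rw [eq_singleton_choose h1 e1, eq_singleton_choose h2 e2, h]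
      simp [e]
  · simp only [encode] at h
    by_cases e1 : H1.edgeSet.Nonempty
    · rw [dif_pos e1] at h
      simp only [Sum.inr.injEq] at h
      obtain ⟨e, he⟩ := e1
      exact absurd (h ▸ (by exact he : (⟨e, H1.edgeSet_subset he⟩ : G.edgeSet) ∈
        {e : G.edgeSet | (e : Sym2 V) ∈ H1.edgeSet})) (by simp)
    · rw [dif_neg e1] at h
      exact absurd h (by simp)
  · simp only [encode] at h
    by_cases e2 : H2.edgeSet.Nonempty
    · rw [dif_pos e2] at h
      simp only [Sum.inr.injEq] at h
      obtain ⟨e, he⟩ := e2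
      exact absurd (h ▸ (by exact he : (⟨e, H2.edgeSet_subset he⟩ : G.edgeSet) ∈
        {e : G.edgeSet | (e : Sym2 V) ∈ H2.edgeSet})) (by simp)
    · rw [dif_neg e2] at h
      exact absurd h (by simp)
  · rfl

lemma encode_surjective {a : V} (ha : ∀ e ∈ G.edgeSet, a ∈ e) :
    Function.Surjective (encode G) := by
  rintro (v | s)
  · refine ⟨Sum.inl ⟨G.singletonSubgraph v, Subgraph.singletonSubgraph_connected⟩, ?_⟩
    simp only [encode]
    rw [dif_neg (by simp)]
    have hch := (Subgraph.singletonSubgraph_connected (G := G) (v := v)).nonempty.choose_spec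
    simp only [singletonSubgraph_verts, Set.mem_singleton_iff] at hch
    exact congrArg _ hch
  · by_cases hs : s.Nonempty
    · have hs' : Subtype.val '' s ⊆ G.edgeSet := by rintro e ⟨e', _, rfl⟩; exact e'.2
      have hne : (Subtype.val '' s).Nonempty := hs.image _
      have ha' : ∀ e ∈ Subtype.val '' s, a ∈ e := fun e he => ha e (hs' he)
      refine ⟨Sum.inl ⟨fromEdges G _ hs', fromEdges_connected hs' hne ha'⟩, ?_⟩
      simp only [encode]
      rw [dif_pos (by rw [fromEdges_edgeSet]; exact hne)]
      congr 1
      ext e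
      simp only [Set.mem_setOf_eq, fromEdges_edgeSet]
      exact Subtype.val_injective.mem_set_image
    · exact ⟨Sum.inr (), by
        simp only [encode]
        rw [Set.not_nonempty_iff_eq_empty.mp hs]⟩

lemma nat_card_set (α : Type*) [Finite α] : Nat.card (Set α) = 2 ^ Nat.card α := by
  have := Fintype.ofFinite α
  classical
  rw [Nat.card_eq_fintype_card, Nat.card_eq_fintype_card, Fintype.card_set]

lemma count_le [Finite V] (G : SimpleGraph V) :
    Nat.card {H : G.Subgraph // H.Connected} + 1 ≤ Nat.card V + 2 ^ Nat.card G.edgeSet := by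
  have h := Nat.card_le_card_of_injective _ (encode_injective (G := G))
  rwa [Nat.card_sum, Nat.card_sum, show Nat.card Unit = 1 from Nat.card_unique, nat_card_set] at h

lemma count_eq [Finite V] {a : V} (ha : ∀ e ∈ G.edgeSet, a ∈ e) :
    Nat.card {H : G.Subgraph // H.Connected} + 1 = Nat.card V + 2 ^ Nat.card G.edgeSet := by
  have h := Nat.card_eq_of_bijective _ ⟨encode_injective (G := G), encode_surjective ha⟩
  rwa [Nat.card_sum, Nat.card_sum, show Nat.card Unit = 1 from Nat.card_unique, nat_card_set] at h

lemma shared_of_connected_two {H : G.Subgraph} (hH : H.Connected) {x y c d : V}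
    (hE : H.edgeSet = {s(x, y), s(c, d)}) : ∃ a, a ∈ s(x, y) ∧ a ∈ s(c, d) := by
  by_contra hno
  have he1 : s(x, y) ∈ H.edgeSet := by rw [hE]; exact Set.mem_insert _ _
  have he2 : s(c, d) ∈ H.edgeSet := by rw [hE]; exact Set.mem_insert_of_mem _ rfl
  have hxy : H.Adj x y := Subgraph.mem_edgeSet.mp he1
  have hcd : H.Adj c d := Subgraph.mem_edgeSet.mp he2
  have step : ∀ u w : V, H.Adj u w → u ∈ s(x, y) → w ∈ s(x, y) := by
    intro u w huw hu
    have hm : s(u, w) ∈ H.edgeSet := Subgraph.mem_edgeSet.mpr huw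
    rw [hE] at hm
    rcases hm with h' | h'
    · rw [← h']; simp
    · exact absurd ⟨u, hu, by rw [← h']; simp⟩ hno
  have walk : ∀ {α β : H.verts} (_ : H.coe.Walk α β),
      (α : V) ∈ s(x, y) → (β : V) ∈ s(x, y) := by
    intro α β p
    induction p with
    | nil => exact id
    | cons hadj p ih => exact fun h => ih (step _ _ ((Subgraph.coe_adj _ _ _).mp hadj) h)
  obtain ⟨p⟩ := hH ⟨x, H.edge_vert hxy⟩ ⟨c, H.edge_vert hcd⟩
  exact hno ⟨c, walk p (by simp), by simp⟩

lemma no_triangle (hacyclic : G.IsAcyclic) {a b c : V} (hab : G.Adj a b) (hbc : G.Adj b c)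
    (hca : G.Adj c a) : False := by
  have hab' : a ≠ b := hab.ne
  have hbc' : b ≠ c := hbc.ne
  have hca' : c ≠ a := hca.ne
  apply hacyclic (Walk.cons hab (Walk.cons hbc (Walk.cons hca Walk.nil)))
  rw [Walk.isCycle_def]
  refine ⟨⟨?_⟩, by simp, ?_⟩
  · simp only [Walk.edges_cons, Walk.edges_nil, List.nodup_cons, List.mem_cons,
      List.not_mem_nil, or_false, List.nodup_nil, and_true, List.mem_singleton, Sym2.eq_iff]
    push_neg
    aesop
  · simp only [Walk.support_cons, Walk.support_nil, List.tail_cons, List.nodup_cons,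
      List.mem_cons, List.not_mem_nil, or_false, List.nodup_nil, and_true,
      List.mem_singleton]
    push_neg
    aesop

lemma pairwise_shared (hsurj : Function.Surjective (encode G)) :
    ∀ e f : Sym2 V, e ∈ G.edgeSet → f ∈ G.edgeSet → ∃ a, a ∈ e ∧ a ∈ f := by
  intro e f
  induction e with
  | h x y =>
    induction f with
    | h c d =>
      intro he hf
      by_cases hef : s(x, y) = s(c, d)
      · exact ⟨x, by simp, by rw [← hef]; simp⟩
      · obtain ⟨z, hz⟩ := hsurj (Sum.inr {⟨s(x, y), he⟩, ⟨s(c, d), hf⟩})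
        rcases z with ⟨H, hH⟩ | ⟨⟩
        · simp only [encode] at hz
          by_cases hne : H.edgeSet.Nonempty
          · rw [dif_pos hne] at hz
            simp only [Sum.inr.injEq] at hz
            have hEdges : H.edgeSet = {s(x, y), s(c, d)} := by
              ext e'
              constructor
              · intro h'
                have hmem : (⟨e', H.edgeSet_subset h'⟩ : G.edgeSet) ∈
                    ({⟨s(x, y), he⟩, ⟨s(c, d), hf⟩} : Set G.edgeSet) := by rw [← hz]; exact h'
                rcases hmem with h'' | h''
                · exact Or.inl (congrArg Subtype.val h'')
                · exact Or.inr (congrArg Subtype.val h'')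
              · rintro (rfl | rfl)
                · have : (⟨s(x, y), he⟩ : G.edgeSet) ∈
                      {e'' : G.edgeSet | (e'' : Sym2 V) ∈ H.edgeSet} := by
                    rw [hz]; exact Set.mem_insert _ _
                  exact this
                · have : (⟨s(c, d), hf⟩ : G.edgeSet) ∈
                      {e'' : G.edgeSet | (e'' : Sym2 V) ∈ H.edgeSet} := by
                    rw [hz]; exact Set.mem_insert_of_mem _ rfl
                  exact this
            exact shared_of_connected_two hH hEdges
          · rw [dif_neg hne] at hz
            exact absurd hz (by simp)
        · simp only [encode, Sum.inr.injEq] at hz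
          have : (⟨s(x, y), he⟩ : G.edgeSet) ∈ (∅ : Set G.edgeSet) := by
            rw [hz]; exact Set.mem_insert _ _
          exact absurd this (by simp)

lemma exists_common_vertex [Nonempty V] (hacyclic : G.IsAcyclic)
    (hsurj : Function.Surjective (encode G)) : ∃ a, ∀ e ∈ G.edgeSet, a ∈ e := by
  classical
  have pair := pairwise_shared hsurj
  by_cases hE : G.edgeSet.Nonempty
  · obtain ⟨e₀, he₀⟩ := hE
    by_cases huniq : ∀ f ∈ G.edgeSet, f = e₀
    · induction e₀ with
      | h x y =>
        refine ⟨x, fun e he => ?_⟩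
        rw [huniq e he]
        simp
    · push_neg at huniq
      obtain ⟨f₀, hf₀, hfe⟩ := huniq
      obtain ⟨a, hae, haf⟩ := pair e₀ f₀ he₀ hf₀
      obtain ⟨b, rfl⟩ := Sym2.mem_iff_exists.mp hae
      obtain ⟨c, rfl⟩ := Sym2.mem_iff_exists.mp haf
      have hab : G.Adj a b := G.mem_edgeSet.mp he₀
      have hac : G.Adj a c := G.mem_edgeSet.mp hf₀
      have hbc : b ≠ c := fun h => hfe (by rw [h])
      refine ⟨a, fun g hg => ?_⟩
      by_contra hag
      obtain ⟨u, hue, hug⟩ := pair s(a, b) g he₀ hg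
      obtain ⟨w, hwf, hwg⟩ := pair s(a, c) g hf₀ hg
      have hub : u = b := by
        rcases Sym2.mem_iff.mp hue with rfl | rfl
        · exact absurd hug hag
        · rfl
      have hwc : w = c := by
        rcases Sym2.mem_iff.mp hwf with rfl | rfl
        · exact absurd hwg hag
        · rfl
      rw [hub] at hug
      rw [hwc] at hwg
      have hgbc : g = s(b, c) := by
        induction g with
        | h p q =>
          rcases Sym2.mem_iff.mp hug with rfl | rfl <;> rcases Sym2.mem_iff.mp hwg with h' | h'
          · exact absurd h'.symm hbc
          · rw [← h']
          · rw [← h', Sym2.eq_swap]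
          · exact absurd h'.symm hbc
      have hbcAdj : G.Adj b c := G.mem_edgeSet.mp (hgbc ▸ hg)
      exact no_triangle hacyclic hab hbcAdj hac.symm
  · exact ⟨Classical.arbitrary V, fun e he =>
      absurd he (by rw [Set.not_nonempty_iff_eq_empty.mp hE]; simp)⟩

lemma acyclic_card_edges [Fintype V] (hac : G.IsAcyclic) :
    Nat.card G.edgeSet + Nat.card G.ConnectedComponent = Fintype.card V := by
  classical
  set root : V → V := fun v => (G.connectedComponentMk v).out with hroot_def
  have hreach : ∀ v, G.Reachable v (root v) := fun v =>
    (ConnectedComponent.eq.mp (Quot.out_eq (G.connectedComponentMk v)).symm)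
  have hrooteq : ∀ {u v}, G.Reachable u v → root u = root v := by
    intro u v h
    simp only [hroot_def]
    rw [ConnectedComponent.sound h]
  have hEU : ∀ v, ∃! p : G.Walk v (root v), p.IsPath := by
    intro v
    refine ⟨(hreach v).some.toPath.1, (hreach v).some.toPath.2, fun q hq => ?_⟩
    exact congrArg Subtype.val (hac.path_unique ⟨q, hq⟩ (hreach v).some.toPath)
  choose f hf hf' using hEU
  have hroot_idem : ∀ v, root (root v) = root v := fun v => hrooteq (hreach v).symm
  have hnil : ∀ v, root v = v → (f v).length = 0 := by
    intro v hv
    have := hf' v (Walk.nil.copy rfl hv.symm) (by simp)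
    rw [← this]
    simp
  have hF : ∀ v : V, root v ≠ v → ¬ (f v).Nil := fun v hv => not_nil_of_ne (Ne.symm hv)
  -- main structural fact: for an edge (p,q) with the path from p no longer than from q,
  -- the path from q starts with that edge
  have main : ∀ p q : V, (hpq : G.Adj p q) → (f p).length ≤ (f q).length →
      ∃ (hq : root q ≠ q), ((f q).firstDart (hF q hq)).edge = s(p, q) := by
    intro p q hpq hlen
    have hrpq : root p = root q := hrooteq hpq.reachable
    have hq : root q ≠ q := by
      intro h0
      have hfq0 : (f q).length = 0 := hnil q h0
      have hcons : Walk.cons hpq (Walk.nil.copy rfl (hrpq.trans h0).symm) = f p :=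
        hf' p _ (by simp [hpq.ne])
      have hl : (f p).length = 1 := by rw [← hcons]; simp
      omega
    have hq_not : q ∉ (f p).support := by
      intro hmem
      have htake : (f p).takeUntil q hmem = Walk.cons hpq Walk.nil := by
        have h1 : ((f p).takeUntil q hmem).IsPath := (hf p).takeUntil hmem
        have h2 : (Walk.cons hpq Walk.nil).IsPath := by simp [hpq.ne]
        exact congrArg Subtype.val (hac.path_unique ⟨_, h1⟩ ⟨_, h2⟩)
      have hdrop : ((f p).dropUntil q hmem).copy rfl hrpq = f q :=
        hf' q _ (by simpa using ((hf p).dropUntil hmem))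
      have hlen2 := congrArg Walk.length ((f p).take_spec hmem)
      rw [Walk.length_append, htake] at hlen2
      have hd : ((f p).dropUntil q hmem).length = (f q).length := by
        rw [← hdrop]; simp
      simp only [Walk.length_cons, Walk.length_nil] at hlen2
      omega
    have hcons : Walk.cons hpq.symm ((f p).copy rfl hrpq) = f q := by
      apply hf' q
      rw [Walk.cons_isPath_iff]
      exact ⟨by simp [hf p], by simpa using hq_not⟩
    refine ⟨hq, ?_⟩
    rw [edge_firstDart]
    have h1 : (f q).getVert 1 = p := by rw [← hcons]; simp
    rw [show (f q).snd = p from h1, Sym2.eq_swap]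
  have key : Nat.card {v : V // root v ≠ v} = Nat.card G.edgeSet := by
    apply Nat.card_eq_of_bijective (fun x : {v : V // root v ≠ v} =>
      (⟨((f x.1).firstDart (hF x.1 x.2)).edge, Dart.edge_mem _⟩ : G.edgeSet))
    constructor
    · rintro ⟨a, ha⟩ ⟨b, hb⟩ h
      simp only [Subtype.mk.injEq] at h
      rw [dart_edge_eq_iff] at h
      have aux : ∀ a b : V, ∀ (ha : root a ≠ a) (hb : root b ≠ b),
          (f a).length ≤ (f b).length →
          (f a).firstDart (hF a ha) = ((f b).firstDart (hF b hb)).symm → a = b := by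
        intro a b ha hb h' h
        exfalso
        have h1 : ((f a).firstDart (hF a ha)).snd = b := congrArg (·.snd) h
        have hadj : G.Adj a b := by
          have h2 := ((f a).firstDart (hF a ha)).adj
          rwa [show ((f a).firstDart (hF a ha)).fst = a from rfl, h1] at h2
        have h3 := congrArg Walk.length (hf' b (((f a).tail).copy (show (f a).snd = b from h1) (hrooteq hadj.reachable))
          (by simpa using (hf a).tail))
        rw [Walk.length_copy] at h3
        have h4 := Walk.length_tail_add_one (hF a ha)
        omega
      rcases h with h | h
      · exact Subtype.ext (congrArg (·.fst) h)
      · rcases le_total (f a).length (f b).length with h' | h'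
        · exact Subtype.ext (aux a b ha hb h' h)
        · refine Subtype.ext (aux b a hb ha h' ?_).symm
          rw [h, Dart.symm_symm]
    · rintro ⟨e, he⟩
      induction e with
      | h x y =>
        have hadj : G.Adj x y := G.mem_edgeSet.mp he
        rcases le_total (f x).length (f y).length with h' | h'
        · obtain ⟨hy, hedge⟩ := main x y hadj h'
          exact ⟨⟨y, hy⟩, Subtype.ext hedge⟩
        · obtain ⟨hx, hedge⟩ := main y x hadj.symm h'
          exact ⟨⟨x, hx⟩, Subtype.ext (hedge.trans Sym2.eq_swap)⟩
  have key2 : Nat.card {v : V // root v = v} = Nat.card G.ConnectedComponent := by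
    apply Nat.card_eq_of_bijective (fun x : {v : V // root v = v} => G.connectedComponentMk x.1)
    constructor
    · rintro ⟨a, ha⟩ ⟨b, hb⟩ h
      have h' : G.connectedComponentMk a = G.connectedComponentMk b := h
      have h2 : root a = root b := by
        simp only [hroot_def]
        rw [h']
      exact Subtype.ext ((ha.symm.trans h2).trans hb)
    · intro C
      refine ⟨⟨root C.out, hroot_idem C.out⟩, ?_⟩
      show G.connectedComponentMk (root C.out) = C
      exact (ConnectedComponent.sound (hreach C.out)).symm.trans C.out_eq
  have split : Nat.card {v : V // root v = v} + Nat.card {v : V // root v ≠ v}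
      = Fintype.card V := by
    rw [Nat.card_eq_fintype_card, Nat.card_eq_fintype_card, Fintype.card_subtype,
      Fintype.card_subtype]
    exact Finset.card_filter_add_card_filter_not _
  omega

lemma edge_all_mem {a : V} (ha : ∀ e ∈ G.edgeSet, a ∈ e) :
    ∀ u w, G.Adj u w → u = a ∨ w = a := by
  intro u w h
  have hm : a ∈ s(u, w) := ha _ (G.mem_edgeSet.mpr h)
  rcases Sym2.mem_iff.mp hm with h' | h'
  exacts [Or.inl h'.symm, Or.inr h'.symm]

lemma isolated_no_adj {a : V} (ha : ∀ e ∈ G.edgeSet, a ∈ e) {v : V} (hva : v ≠ a)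
    (hAv : ¬ G.Adj a v) : ∀ w, ¬ G.Adj v w := by
  intro w h
  rcases edge_all_mem ha v w h with rfl | rfl
  · exact hva rfl
  · exact hAv h.symm

lemma isolated_reach {a : V} (ha : ∀ e ∈ G.edgeSet, a ∈ e) {v : V} (hva : v ≠ a)
    (hAv : ¬ G.Adj a v) : ∀ z, G.Reachable v z → z = v := by
  rintro z ⟨p⟩
  cases p with
  | nil => rfl
  | cons h q => exact absurd h (isolated_no_adj ha hva hAv _)

lemma card_components_common [Finite V] {a : V} (ha : ∀ e ∈ G.edgeSet, a ∈ e) :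
    Nat.card G.ConnectedComponent = Nat.card {v : V // v ≠ a ∧ ¬ G.Adj a v} + 1 := by
  have h := Nat.card_eq_of_bijective (fun x : {v : V // v ≠ a ∧ ¬ G.Adj a v} ⊕ Unit =>
    match x with
    | Sum.inl v => G.connectedComponentMk v.1
    | Sum.inr _ => G.connectedComponentMk a) ⟨?_, ?_⟩
  · rw [Nat.card_sum, show Nat.card Unit = 1 from Nat.card_unique] at h
    omega
  · rintro (⟨v, hv1, hv2⟩ | ⟨⟩) (⟨w, hw1, hw2⟩ | ⟨⟩) h
    · have hr : G.Reachable v w := ConnectedComponent.eq.mp h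
      have : w = v := isolated_reach ha hv1 hv2 w hr
      subst this
      rfl
    · have hr : G.Reachable v a := ConnectedComponent.eq.mp h
      exact absurd (isolated_reach ha hv1 hv2 a hr) (Ne.symm hv1)
    · have hr : G.Reachable w a := (ConnectedComponent.eq.mp h).symm
      exact absurd (isolated_reach ha hw1 hw2 a hr) (Ne.symm hw1)
    · rfl
  · intro C
    obtain ⟨v, hv⟩ := C.exists_rep
    by_cases hva : v = a
    · exact ⟨Sum.inr (), by subst hva; exact hv⟩
    · by_cases hAv : G.Adj a v
      · refine ⟨Sum.inr (), ?_⟩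
        show G.connectedComponentMk a = C
        rw [← hv]
        exact ConnectedComponent.sound hAv.reachable
      · exact ⟨Sum.inl ⟨v, hva, hAv⟩, hv⟩

lemma card_neighbors_eq_edges {a : V} (ha : ∀ e ∈ G.edgeSet, a ∈ e) :
    Nat.card {v : V // G.Adj a v} = Nat.card G.edgeSet := by
  apply Nat.card_eq_of_bijective
    (fun v : {v // G.Adj a v} => (⟨s(a, v.1), G.mem_edgeSet.mpr v.2⟩ : G.edgeSet))
  constructor
  · rintro ⟨u, hu⟩ ⟨w, hw⟩ h
    simp only [Subtype.mk.injEq, Sym2.eq_iff] at h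
    rcases h with ⟨-, h⟩ | ⟨h1, h2⟩
    · exact Subtype.ext h
    · exact absurd (h2 ▸ hu) G.irrefl
  · rintro ⟨e, he⟩
    have hm : a ∈ e := ha e he
    obtain ⟨b, rfl⟩ := Sym2.mem_iff_exists.mp hm
    exact ⟨⟨b, G.mem_edgeSet.mp he⟩, rfl⟩

lemma card_partition (a : V) [Finite V] :
    Nat.card V = 1 + Nat.card {v : V // G.Adj a v} + Nat.card {v : V // v ≠ a ∧ ¬ G.Adj a v} := by
  classical
  have h := Nat.card_eq_of_bijective
    (fun x : Unit ⊕ {v : V // G.Adj a v} ⊕ {v : V // v ≠ a ∧ ¬ G.Adj a v} =>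
      match x with
      | Sum.inl _ => a
      | Sum.inr (Sum.inl v) => v.1
      | Sum.inr (Sum.inr v) => v.1) ⟨?_, ?_⟩
  · rw [Nat.card_sum, Nat.card_sum, show Nat.card Unit = 1 from Nat.card_unique] at h
    omega
  · rintro (⟨⟩ | ⟨v, hv⟩ | ⟨v, hv1, hv2⟩) (⟨⟩ | ⟨w, hw⟩ | ⟨w, hw1, hw2⟩) h <;>
      simp only at h
    · rfl
    · exact absurd h hw.ne
    · exact absurd h.symm hw1
    · exact absurd h.symm hv.ne
    · exact congrArg (fun t => Sum.inr (Sum.inl t)) (Subtype.ext h)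
    · exact absurd (h ▸ hv) hw2
    · exact absurd h hv1
    · exact absurd (h.symm ▸ hw) hv2
    · exact congrArg (fun t => Sum.inr (Sum.inr t)) (Subtype.ext h)
  · intro v
    by_cases hva : v = a
    · exact ⟨Sum.inl (), hva.symm⟩
    · by_cases hAv : G.Adj a v
      · exact ⟨Sum.inr (Sum.inl ⟨v, hAv⟩), rfl⟩
      · exact ⟨Sum.inr (Sum.inr ⟨v, hva, hAv⟩), rfl⟩

lemma common_of_iso {p m : ℕ} (φ : G ≃g ((⊥ : SimpleGraph (Fin p)) ⊕g _root_.starGraph m)) :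
    ∃ a, ∀ e ∈ G.edgeSet, a ∈ e := by
  refine ⟨φ.symm (Sum.inr 0), fun e he => ?_⟩
  induction e with
  | h u v =>
    have hadj : G.Adj u v := G.mem_edgeSet.mp he
    have h2 : ((⊥ : SimpleGraph (Fin p)) ⊕g _root_.starGraph m).Adj (φ u) (φ v) :=
      φ.map_adj_iff.mpr hadj
    rcases hu : φ u with x | x <;> rcases hv : φ v with y | y <;> rw [hu, hv] at h2
    · simp [SimpleGraph.sum] at h2
    · simp [SimpleGraph.sum] at h2
    · simp [SimpleGraph.sum] at h2
    · 
      have h3 : x ≠ y ∧ (x = 0 ∨ y = 0) := by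
        simpa [SimpleGraph.sum, _root_.starGraph, SimpleGraph.fromRel_adj] using h2
      rcases h3.2 with rfl | rfl
      · have : u = φ.symm (Sum.inr 0) := by rw [← hu]; simp
        rw [← this]; simp
      · have : v = φ.symm (Sum.inr 0) := by rw [← hv]; simp
        rw [← this]; simp

lemma iso_construct [Fintype V] {n k : ℕ} {a : V} (hn : Fintype.card V = n)
    (hk : 1 ≤ k) (hkn : k ≤ n)
    (hIcard : Nat.card {v : V // v ≠ a ∧ ¬ G.Adj a v} = k - 1)
    (hNcard : Nat.card {v : V // G.Adj a v} = n - k)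
    (ha : ∀ e ∈ G.edgeSet, a ∈ e) :
    Nonempty (G ≃g ((⊥ : SimpleGraph (Fin (k - 1))) ⊕g _root_.starGraph (n - k))) := by
  classical
  have eI : {v : V // v ≠ a ∧ ¬ G.Adj a v} ≃ Fin (k - 1) :=
    Fintype.equivFinOfCardEq (by rw [← Nat.card_eq_fintype_card]; exact hIcard)
  have eN : {v : V // G.Adj a v} ≃ Fin (n - k) :=
    Fintype.equivFinOfCardEq (by rw [← Nat.card_eq_fintype_card]; exact hNcard)
  let F : V → Fin (k - 1) ⊕ Fin (n - k + 1) := fun v =>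
    if h : v = a then Sum.inr 0
    else if h2 : G.Adj a v then Sum.inr ((eN ⟨v, h2⟩).succ)
    else Sum.inl (eI ⟨v, h, h2⟩)
  let Finv : Fin (k - 1) ⊕ Fin (n - k + 1) → V := fun x =>
    match x with
    | Sum.inl i => (eI.symm i).1
    | Sum.inr j => if h : j = 0 then a else (eN.symm (j.pred h)).1
  have hleft : ∀ v, Finv (F v) = v := by
    intro v
    by_cases h : v = a
    · simp [F, Finv, h]
    · by_cases h2 : G.Adj a v
      · simp [F, Finv, h, h2, Fin.succ_ne_zero, Fin.pred_succ]
      · simp [F, Finv, h, h2]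
  have hright : ∀ x, F (Finv x) = x := by
    rintro (i | j)
    · have hp := (eI.symm i).2
      simp [F, Finv, hp.1, hp.2]
    · by_cases h : j = 0
      · simp [F, Finv, h]
      · have hp := (eN.symm (j.pred h)).2
        have hne : (eN.symm (j.pred h)).1 ≠ a := fun hh => G.irrefl (hh ▸ hp)
        simp [F, Finv, h, hne, hp, Fin.succ_pred]
  -- adjacency characterization
  have adj_iff : ∀ u v : V, G.Adj u v ↔
      ((u = a ∧ G.Adj a v) ∨ (v = a ∧ G.Adj a u)) := by
    intro u v
    constructor
    · intro h
      rcases edge_all_mem ha u v h with rfl | rfl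
      · exact Or.inl ⟨rfl, h⟩
      · exact Or.inr ⟨rfl, h.symm⟩
    · rintro (⟨rfl, h⟩ | ⟨rfl, h⟩)
      · exact h
      · exact h.symm
  have hFa : ∀ v (h : v = a), F v = Sum.inr 0 := fun v h => dif_pos h
  have hFN : ∀ v (h : v ≠ a) (h2 : G.Adj a v), F v = Sum.inr ((eN ⟨v, h2⟩).succ) := by
    intro v h h2
    show dite _ _ _ = _
    rw [dif_neg h, dif_pos h2]
  have hFI : ∀ v (h : v ≠ a) (h2 : ¬ G.Adj a v), F v = Sum.inl (eI ⟨v, h, h2⟩) := by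
    intro v h h2
    show dite _ _ _ = _
    rw [dif_neg h, dif_neg h2]
  refine ⟨⟨Equiv.mk F Finv hleft hright, ?_⟩⟩
  intro u v
  show ((⊥ : SimpleGraph (Fin (k - 1))) ⊕g _root_.starGraph (n - k)).Adj (F u) (F v) ↔ G.Adj u v
  by_cases hu : u = a <;> by_cases hv : v = a
  · rw [hFa u hu, hFa v hv]
    show (_root_.starGraph (n - k)).Adj 0 0 ↔ _
    constructor
    · intro h; exact absurd rfl h.ne
    · intro h; exact absurd (hu ▸ hv ▸ h) G.irrefl
  · by_cases h2 : G.Adj a v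
    · rw [hFa u hu, hFN v hv h2]
      show (_root_.starGraph (n - k)).Adj 0 _ ↔ _
      rw [_root_.starGraph, SimpleGraph.fromRel_adj]
      constructor
      · intro _; rw [hu]; exact h2
      · intro _; exact ⟨(Fin.succ_ne_zero _).symm, Or.inl rfl⟩
    · rw [hFa u hu, hFI v hv h2]
      exact iff_of_false (by simp [SimpleGraph.sum]) (fun h => h2 (hu ▸ h))
  · by_cases h2 : G.Adj a u
    · rw [hFa v hv, hFN u hu h2]
      show (_root_.starGraph (n - k)).Adj _ 0 ↔ _
      rw [_root_.starGraph, SimpleGraph.fromRel_adj]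
      constructor
      · intro _; rw [hv]; exact h2.symm
      · intro _; exact ⟨Fin.succ_ne_zero _, Or.inr rfl⟩
    · rw [hFa v hv, hFI u hu h2]
      exact iff_of_false (by simp [SimpleGraph.sum]) (fun h => h2 (hv ▸ h.symm))
  · have hGuv : ¬ G.Adj u v := by
      rw [adj_iff]
      rintro (⟨rfl, -⟩ | ⟨rfl, -⟩)
      · exact hu rfl
      · exact hv rfl
    by_cases h2 : G.Adj a u <;> by_cases h3 : G.Adj a v
    · rw [hFN u hu h2, hFN v hv h3]
      show (_root_.starGraph (n - k)).Adj _ _ ↔ _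
      rw [_root_.starGraph, SimpleGraph.fromRel_adj]
      simp only [hGuv, iff_false]
      rintro ⟨-, h0 | h0⟩ <;> exact Fin.succ_ne_zero _ h0
    · rw [hFN u hu h2, hFI v hv h3]
      exact iff_of_false (by simp [SimpleGraph.sum]) hGuv
    · rw [hFI u hu h2, hFN v hv h3]
      exact iff_of_false (by simp [SimpleGraph.sum]) hGuv
    · rw [hFI u hu h2, hFI v hv h3]
      exact iff_of_false (by simp [SimpleGraph.sum]) hGuv

end CoreAux

/-- If `G` is an acyclic graph on `n` vertices with `k` connected components, then
`F(G) ≤ 2^(n-k) + n - 1`, with equality if and only if `G` is the disjoint union of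
`k - 1` isolated vertices and the star `K_{1,n-k}`. -/
theorem coreIndex_acyclic_upper_bound {V : Type*} [Fintype V] (G : SimpleGraph V)
    (n k : ℕ) (hn : Fintype.card V = n) (hk : 1 ≤ k) (hkn : k ≤ n)
    (hacyclic : G.IsAcyclic) (hcomp : Nat.card G.ConnectedComponent = k) :
    coreIndex G ≤ 2 ^ (n - k) + n - 1 ∧
    (coreIndex G = 2 ^ (n - k) + n - 1 ↔
      Nonempty (G ≃g ((⊥ : SimpleGraph (Fin (k - 1))) ⊕g _root_.starGraph (n - k)))) := by
  classical
  haveI : Nonempty V := Fintype.card_pos_iff.mp (by omega)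
  have hnV : Nat.card V = n := by rw [Nat.card_eq_fintype_card, hn]
  have hE : Nat.card G.edgeSet + k = n := by
    have h := CoreAux.acyclic_card_edges (G := G) hacyclic
    rwa [hcomp, hn] at h
  have hEcard : Nat.card G.edgeSet = n - k := by omega
  have hle := CoreAux.count_le G
  rw [hnV, hEcard] at hle
  have hcore : coreIndex G = Nat.card {H : G.Subgraph // H.Connected} := rfl
  have hpow : 1 ≤ 2 ^ (n - k) := Nat.one_le_two_pow
  refine ⟨by rw [hcore]; omega, ?_, ?_⟩
  · intro heq
    rw [hcore] at heq
    have hbij : Function.Bijective (CoreAux.encode G) := by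
      rw [Nat.bijective_iff_injective_and_card]
      refine ⟨CoreAux.encode_injective, ?_⟩
      rw [Nat.card_sum, Nat.card_sum, show Nat.card Unit = 1 from Nat.card_unique,
        CoreAux.nat_card_set, hnV, hEcard]
      omega
    obtain ⟨a, ha⟩ := CoreAux.exists_common_vertex hacyclic hbij.surjective
    have hIcomp := CoreAux.card_components_common ha
    rw [hcomp] at hIcomp
    have hIcard : Nat.card {v : V // v ≠ a ∧ ¬ G.Adj a v} = k - 1 := by omega
    have hpart := CoreAux.card_partition (G := G) a
    rw [hnV] at hpart
    have hNcard : Nat.card {v : V // G.Adj a v} = n - k := by omega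
    exact CoreAux.iso_construct hn hk hkn hIcard hNcard ha
  · rintro ⟨φ⟩
    obtain ⟨a, ha⟩ := CoreAux.common_of_iso φ
    have hEq := CoreAux.count_eq ha
    rw [hnV, hEcard] at hEq
    rw [hcore]
    omega
end

section
/- Let G be a connected graph with a bridge {u,v} where neither u nor v is a pendant vertex. Let G' be obtained by contracting the edge {u,v} and attaching a new pendant vertex y at the merged vertex. Then F(G') > F(G). -/
open SimpleGraph

/-- The graph obtained from `G` by contracting the edge `{u, v}` (the merged vertex is
`u`) and re-using the vertex `v` as a new pendant vertex attached at the merged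
vertex. -/
def contractEdgeAddPendant {V : Type*} (G : SimpleGraph V) (u v : V) : SimpleGraph V :=
  SimpleGraph.fromRel (fun x y =>
    (x ≠ u ∧ x ≠ v ∧ y ≠ u ∧ y ≠ v ∧ G.Adj x y) ∨
    (x = u ∧ y ≠ u ∧ y ≠ v ∧ (G.Adj u y ∨ G.Adj v y)) ∨
    (x = u ∧ y = v))

namespace CoreIndexAux

variable {V : Type*}

/-- The relabeling map sending `v` to `u`. -/
noncomputable def rho (u v x : V) : V :=
  letI := Classical.dec (x = v); if x = v then u else x

@[simp] lemma rho_v (u v : V) : rho u v v = u := by simp [rho]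

lemma rho_of_ne {u v x : V} (h : x ≠ v) : rho u v x = x := by
  simp [rho, h]

lemma rho_ne_v {u v x : V} (hne : u ≠ v) : rho u v x ≠ v := by
  by_cases h : x = v
  · subst h; simpa using hne
  · simpa [rho_of_ne h] using h

lemma rho_inj {u v a b : V} (ha : a ≠ u) (hb : b ≠ u)
    (h : rho u v a = rho u v b) : a = b := by
  by_cases hav : a = v <;> by_cases hbv : b = v
  · rw [hav, hbv]
  · subst hav; rw [rho_v, rho_of_ne hbv] at h; exact absurd h.symm hb
  · subst hbv; rw [rho_v, rho_of_ne hav] at h; exact absurd h ha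
  · rwa [rho_of_ne hav, rho_of_ne hbv] at h

lemma rho_eq_u_iff {u v a : V} (ha : a ≠ u) : rho u v a = u ↔ a = v := by
  constructor
  · intro h
    by_contra hav
    rw [rho_of_ne hav] at h; exact ha h
  · rintro rfl; simp

section AdjLemmas

variable {G : SimpleGraph V} {u v : V}

lemma adj1 {x y : V} (hx : x ≠ v) (hy : y ≠ v) (h : G.Adj x y) :
    (contractEdgeAddPendant G u v).Adj x y := by
  rw [contractEdgeAddPendant, fromRel_adj]
  refine ⟨h.ne, ?_⟩
  by_cases hxu : x = u
  · subst hxu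
    exact Or.inl (Or.inr (Or.inl ⟨rfl, h.ne', hy, Or.inl h⟩))
  · by_cases hyu : y = u
    · subst hyu
      exact Or.inr (Or.inr (Or.inl ⟨rfl, hxu, hx, Or.inl h.symm⟩))
    · exact Or.inl (Or.inl ⟨hxu, hx, hyu, hy, h⟩)

lemma adj2 {y : V} (hyu : y ≠ u) (hyv : y ≠ v) (h : G.Adj v y) :
    (contractEdgeAddPendant G u v).Adj u y := by
  rw [contractEdgeAddPendant, fromRel_adj]
  exact ⟨Ne.symm hyu, Or.inl (Or.inr (Or.inl ⟨rfl, hyu, hyv, Or.inr h⟩))⟩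

lemma adj3 (hne : u ≠ v) : (contractEdgeAddPendant G u v).Adj u v := by
  rw [contractEdgeAddPendant, fromRel_adj]
  exact ⟨hne, Or.inl (Or.inr (Or.inr ⟨rfl, rfl⟩))⟩

lemma adj_v_inv {y : V} (hne : u ≠ v) (h : (contractEdgeAddPendant G u v).Adj v y) :
    y = u := by
  rw [contractEdgeAddPendant, fromRel_adj] at h
  obtain ⟨hvy, h | h⟩ := h
  · rcases h with ⟨_, h, _⟩ | ⟨h, _⟩ | ⟨h, _⟩
    · exact absurd rfl h
    · exact absurd h (Ne.symm hne)
    · exact absurd h (Ne.symm hne)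
  · rcases h with ⟨_, _, _, h, _⟩ | ⟨_, _, h, _⟩ | ⟨hyu, h⟩
    · exact absurd rfl h
    · exact absurd rfl h
    · exact hyu

lemma adj_u_inv {y : V} (hyv : y ≠ v) (h : (contractEdgeAddPendant G u v).Adj u y) :
    y ≠ u ∧ (G.Adj u y ∨ G.Adj v y) := by
  rw [contractEdgeAddPendant, fromRel_adj] at h
  obtain ⟨huy, h | h⟩ := h
  · rcases h with ⟨h, _⟩ | ⟨_, h1, _, h2⟩ | ⟨_, h⟩
    · exact absurd rfl h
    · exact ⟨h1, h2⟩
    · exact absurd h hyv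
  · rcases h with ⟨_, _, h, _⟩ | ⟨rfl, h, _⟩ | ⟨rfl, h⟩
    · exact absurd rfl h
    · exact absurd rfl h
    · exact absurd rfl (Ne.symm huy)

lemma adj_other_inv {x y : V} (hxu : x ≠ u) (hxv : x ≠ v) (hyu : y ≠ u) (hyv : y ≠ v)
    (h : (contractEdgeAddPendant G u v).Adj x y) : G.Adj x y := by
  rw [contractEdgeAddPendant, fromRel_adj] at h
  obtain ⟨hxy, h | h⟩ := h
  · rcases h with ⟨_, _, _, _, h⟩ | ⟨h, _⟩ | ⟨h, _⟩
    · exact h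
    · exact absurd h hxu
    · exact absurd h hxu
  · rcases h with ⟨_, _, _, _, h⟩ | ⟨h, _⟩ | ⟨h, _⟩
    · exact h.symm
    · exact absurd h hyu
    · exact absurd h hyu

lemma bridge_adj (hb : G.IsBridge s(u, v)) (hc : G.Connected) : G.Adj u v := by
  obtain ⟨p⟩ := hc u v
  by_contra h
  exact isBridge_iff.mp hb
    (reachable_deleteEdges_iff_exists_walk.mpr ⟨p, fun hm => h (p.adj_of_mem_edges hm)⟩)

lemma no_common (hb : G.IsBridge s(u, v)) {y : V} (h1 : G.Adj u y) (h2 : G.Adj v y) :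
    False := by
  have h := isBridge_iff.mp hb
  rw [reachable_delete_edges_iff_exists_walk] at h
  refine h ⟨Walk.cons h1 (Walk.cons h2.symm Walk.nil), ?_⟩
  simp only [Walk.edges_cons, Walk.edges_nil, List.mem_cons, List.not_mem_nil, or_false]
  rintro (h' | h')
  · rw [Sym2.eq_iff] at h'
    rcases h' with ⟨-, h'⟩ | ⟨h', -⟩
    · exact h2.ne h'
    · exact h1.ne h'
  · rw [Sym2.eq_iff] at h'
    rcases h' with ⟨h', -⟩ | ⟨-, h'⟩
    · exact h1.ne h'
    · exact h2.ne h'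

lemma adj_of_mem_conn (hb : G.IsBridge s(u, v)) (H : G.Subgraph) (hH : H.Connected)
    (hu : u ∈ H.verts) (hv : v ∈ H.verts) : H.Adj u v := by
  by_contra hnadj
  have h := isBridge_iff.mp hb
  refine h ?_
  have hrel : ∀ ⦃p q : H.verts⦄, H.coe.Adj p q → (G \ fromEdgeSet {s(u, v)}).Adj p.1 q.1 := by
    rintro ⟨a, ha⟩ ⟨c, hc⟩ hadj
    have hac : H.Adj a c := hadj
    rw [sdiff_adj]
    refine ⟨H.adj_sub hac, ?_⟩
    rw [fromEdgeSet_adj]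
    rintro ⟨hmem, -⟩
    rw [Set.mem_singleton_iff, Sym2.eq_iff] at hmem
    rcases hmem with ⟨rfl, rfl⟩ | ⟨rfl, rfl⟩
    · exact hnadj hac
    · exact hnadj hac.symm
  exact (Reachable.map ⟨Subtype.val, @hrel⟩ (hH.coe.preconnected ⟨u, hu⟩ ⟨v, hv⟩) :)

/-- Transfer connectivity along a vertex map. -/
lemma connected_of_map {G₁ G₂ : SimpleGraph V} {H : G₁.Subgraph} {K : G₂.Subgraph}
    (f : V → V) (hH : H.Connected)
    (hmem : ∀ a ∈ H.verts, f a ∈ K.verts)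
    (hadj : ∀ a b, H.Adj a b → K.Adj (f a) (f b) ∨ f a = f b)
    (hsurj : ∀ x ∈ K.verts, ∃ a, ∃ _ : a ∈ H.verts, x = f a ∨ K.Adj x (f a)) :
    K.Connected := by
  have key : ∀ (a b : H.verts) (_ : H.coe.Walk a b),
      K.coe.Reachable ⟨f a, hmem a a.2⟩ ⟨f b, hmem b b.2⟩ := by
    intro a b p
    induction p with
    | nil => exact Reachable.refl _
    | @cons x y z h p ih =>
      have h' : H.Adj x y := h
      rcases hadj x y h' with h'' | h''
      · exact (Adj.reachable (by exact h'' : K.coe.Adj ⟨f x, hmem x x.2⟩ ⟨f y, hmem y y.2⟩)).trans ih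
      · have he : (⟨f (x : V), hmem x x.2⟩ : K.verts) = ⟨f (y : V), hmem y y.2⟩ :=
          Subtype.ext h''
        rw [he]
        exact ih
  rw [Subgraph.connected_iff]
  constructor
  · constructor
    rintro ⟨x, hx⟩ ⟨y, hy⟩
    obtain ⟨a, ha, hxa⟩ := hsurj x hx
    obtain ⟨b, hb, hyb⟩ := hsurj y hy
    obtain ⟨p⟩ := hH.coe.preconnected ⟨a, ha⟩ ⟨b, hb⟩
    have hmid := key ⟨a, ha⟩ ⟨b, hb⟩ p
    have hxr : K.coe.Reachable ⟨x, hx⟩ ⟨f a, hmem a ha⟩ := by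
      rcases hxa with rfl | hxa
      · exact Reachable.refl _
      · exact Adj.reachable (by exact hxa)
    have hyr : K.coe.Reachable ⟨y, hy⟩ ⟨f b, hmem b hb⟩ := by
      rcases hyb with rfl | hyb
      · exact Reachable.refl _
      · exact Adj.reachable (by exact hyb)
    exact (hxr.trans hmid).trans hyr.symm
  · obtain ⟨a, ha⟩ := hH.nonempty
    exact ⟨f a, hmem a ha⟩

lemma exists_adj_of_mem (H : G.Subgraph) (hH : H.Connected) {w : V}
    (hw : w ∈ H.verts) (hne : H.verts ≠ {w}) : ∃ y, H.Adj w y := by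
  have : ∃ z ∈ H.verts, z ≠ w := by
    by_contra hcon
    push_neg at hcon
    exact hne (Set.eq_singleton_iff_unique_mem.mpr ⟨hw, hcon⟩)
  obtain ⟨z, hz, hzw⟩ := this
  obtain ⟨p⟩ := hH.coe.preconnected ⟨w, hw⟩ ⟨z, hz⟩
  cases p with
  | nil => exact absurd rfl hzw
  | cons h _ => exact ⟨_, h⟩


section Maps

/-- Case 1: `v ∉ H.verts`; the identity embedding. -/
def map1 (H : G.Subgraph) (h : v ∉ H.verts) : (contractEdgeAddPendant G u v).Subgraph where
  verts := H.verts
  Adj := H.Adj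
  adj_sub := by
    intro a b hab
    exact adj1 (fun e => h (e ▸ H.edge_vert hab)) (fun e => h (e ▸ H.edge_vert hab.symm))
      (H.adj_sub hab)
  edge_vert := fun hab => H.edge_vert hab
  symm := H.symm

/-- Case 3: `v ∈ H.verts`, `u ∉ H.verts`; relabel `v` as `u`. -/
noncomputable def map3 (H : G.Subgraph) (h : u ∉ H.verts) :
    (contractEdgeAddPendant G u v).Subgraph where
  verts := rho u v '' H.verts
  Adj x y := ∃ a b, H.Adj a b ∧ rho u v a = x ∧ rho u v b = y
  adj_sub := by
    rintro x y ⟨a, b, hab, rfl, rfl⟩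
    have hau : a ≠ u := fun e => h (e ▸ H.edge_vert hab)
    have hbu : b ≠ u := fun e => h (e ▸ H.edge_vert hab.symm)
    by_cases hav : a = v
    · have hbv : b ≠ v := fun e => (H.adj_sub hab).ne (hav.trans e.symm)
      rw [hav, rho_v, rho_of_ne hbv]
      exact adj2 hbu hbv (hav ▸ H.adj_sub hab)
    · by_cases hbv : b = v
      · rw [hbv, rho_v, rho_of_ne hav]
        exact (adj2 hau hav (hbv ▸ (H.adj_sub hab).symm)).symm
      · rw [rho_of_ne hav, rho_of_ne hbv]
        exact adj1 hav hbv (H.adj_sub hab)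
  edge_vert := by
    rintro x y ⟨a, b, hab, rfl, -⟩
    exact ⟨a, H.edge_vert hab, rfl⟩
  symm := by
    constructor
    rintro x y ⟨a, b, hab, rfl, rfl⟩
    exact ⟨b, a, hab.symm, rfl, rfl⟩

/-- Case 4: `u, v ∈ H.verts`; contract the edge and attach the pendant `v`. -/
noncomputable def map4 (H : G.Subgraph) (hne : u ≠ v) :
    (contractEdgeAddPendant G u v).Subgraph where
  verts := H.verts ∪ {u, v}
  Adj x y := (∃ a b, H.Adj a b ∧ rho u v a = x ∧ rho u v b = y ∧ x ≠ y) ∨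
    (x = u ∧ y = v) ∨ (x = v ∧ y = u)
  adj_sub := by
    rintro x y (⟨a, b, hab, rfl, rfl, hxy⟩ | ⟨rfl, rfl⟩ | ⟨rfl, rfl⟩)
    · by_cases hav : a = v
      · have hbv : b ≠ v := fun e => (H.adj_sub hab).ne (hav.trans e.symm)
        rw [hav, rho_v, rho_of_ne hbv] at hxy ⊢
        exact adj2 (Ne.symm hxy) hbv (hav ▸ H.adj_sub hab)
      · by_cases hbv : b = v
        · rw [hbv, rho_v, rho_of_ne hav] at hxy ⊢
          exact (adj2 hxy hav (hbv ▸ (H.adj_sub hab).symm)).symm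
        · rw [rho_of_ne hav, rho_of_ne hbv]
          exact adj1 hav hbv (H.adj_sub hab)
    · exact adj3 hne
    · exact (adj3 hne).symm
  edge_vert := by
    rintro x y (⟨a, b, hab, rfl, -, -⟩ | ⟨rfl, -⟩ | ⟨rfl, -⟩)
    · by_cases hav : a = v
      · rw [hav, rho_v]; exact Or.inr (Or.inl rfl)
      · rw [rho_of_ne hav]; exact Or.inl (H.edge_vert hab)
    · exact Or.inr (Or.inl rfl)
    · exact Or.inr (Or.inr rfl)
  symm := by
    constructor
    rintro x y (⟨a, b, hab, rfl, rfl, hxy⟩ | ⟨rfl, rfl⟩ | ⟨rfl, rfl⟩)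
    · exact Or.inl ⟨b, a, hab.symm, rfl, rfl, Ne.symm hxy⟩
    · exact Or.inr (Or.inr ⟨rfl, rfl⟩)
    · exact Or.inr (Or.inl ⟨rfl, rfl⟩)

lemma map1_connected {H : G.Subgraph} (hH : H.Connected) (h : v ∉ H.verts) :
    (map1 (u := u) H h).Connected := by
  refine connected_of_map id hH (fun a ha => ha) (fun a b hab => Or.inl hab) ?_
  intro x hx
  exact ⟨x, hx, Or.inl rfl⟩

lemma map3_connected {H : G.Subgraph} (hH : H.Connected) (h : u ∉ H.verts) :
    (map3 (v := v) H h).Connected := by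
  refine connected_of_map (rho u v) hH (fun a ha => ⟨a, ha, rfl⟩)
    (fun a b hab => Or.inl ⟨a, b, hab, rfl, rfl⟩) ?_
  rintro x ⟨a, ha, rfl⟩
  exact ⟨a, ha, Or.inl rfl⟩

lemma map4_connected {H : G.Subgraph} (hH : H.Connected) (hne : u ≠ v)
    (hu : u ∈ H.verts) : (map4 H hne).Connected := by
  refine connected_of_map (rho u v) hH ?_ ?_ ?_
  · intro a ha
    by_cases hav : a = v
    · rw [hav, rho_v]; exact Or.inr (Or.inl rfl)
    · rw [rho_of_ne hav]; exact Or.inl ha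
  · intro a b hab
    by_cases hr : rho u v a = rho u v b
    · exact Or.inr hr
    · exact Or.inl (Or.inl ⟨a, b, hab, rfl, rfl, hr⟩)
  · intro x hx
    simp only [map4, Set.mem_union, Set.mem_insert_iff, Set.mem_singleton_iff] at hx
    have hxv' : x = v → ∃ a, ∃ _ : a ∈ H.verts, x = rho u v a ∨ (map4 H hne).Adj x (rho u v a) := by
      intro hxv
      refine ⟨u, hu, Or.inr ?_⟩
      rw [hxv, rho_of_ne hne]
      exact Or.inr (Or.inr ⟨rfl, rfl⟩)
    rcases hx with hx | hx | hx
    · by_cases hxv : x = v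
      · exact hxv' hxv
      · exact ⟨x, hx, Or.inl (rho_of_ne hxv).symm⟩
    · exact ⟨u, hu, Or.inl (hx.trans (rho_of_ne hne).symm)⟩
    · exact hxv' hx

lemma ne_of_notMem {α : Type*} {s : Set α} {a b : α} (h : b ∉ s) (ha : a ∈ s) : a ≠ b :=
  fun e => h (e ▸ ha)

lemma v_not_mem_map3 {H : G.Subgraph} (hne : u ≠ v) (h : u ∉ H.verts) :
    v ∉ (map3 (v := v) H h).verts := by
  rintro ⟨a, -, ha⟩
  exact rho_ne_v hne ha

lemma map1_inj {H1 H2 : G.Subgraph} {h1 : v ∉ H1.verts} {h2 : v ∉ H2.verts}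
    (heq : map1 (u := u) H1 h1 = map1 (u := u) H2 h2) : H1 = H2 := by
  have hv' : (map1 (u := u) H1 h1).verts = (map1 (u := u) H2 h2).verts := by rw [heq]
  have ha' : (map1 (u := u) H1 h1).Adj = (map1 (u := u) H2 h2).Adj := by rw [heq]
  exact Subgraph.ext hv' ha'

lemma map3_le {H1 H2 : G.Subgraph} {h1 : u ∉ H1.verts} {h2 : u ∉ H2.verts}
    (heq : map3 (v := v) H1 h1 = map3 (v := v) H2 h2) : H1 ≤ H2 := by
  constructor
  · intro x hx
    have hx' : rho u v x ∈ (map3 (v := v) H2 h2).verts := by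
      rw [← heq]; exact ⟨x, hx, rfl⟩
    obtain ⟨a, ha, hax⟩ := hx'
    rwa [rho_inj (ne_of_notMem h2 ha) (ne_of_notMem h1 hx) hax] at ha
  · intro x y hxy
    have h' : (map3 (v := v) H2 h2).Adj (rho u v x) (rho u v y) := by
      rw [← heq]; exact ⟨x, y, hxy, rfl, rfl⟩
    obtain ⟨a, b, hab, ha, hb⟩ := h'
    have hax : a = x := rho_inj (ne_of_notMem h2 (H2.edge_vert hab))
      (ne_of_notMem h1 (H1.edge_vert hxy)) ha
    have hby : b = y := rho_inj (ne_of_notMem h2 (H2.edge_vert hab.symm))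
      (ne_of_notMem h1 (H1.edge_vert hxy.symm)) hb
    rwa [hax, hby] at hab

lemma map4_le (hb : G.IsBridge s(u, v)) {hne : u ≠ v} {H1 H2 : G.Subgraph}
    (h1uv : H1.Adj u v) (h2uv : H2.Adj u v)
    (heq : map4 H1 hne = map4 H2 hne) : H1 ≤ H2 := by
  have hu2 : u ∈ H2.verts := H2.edge_vert h2uv
  have hv2 : v ∈ H2.verts := H2.edge_vert h2uv.symm
  have key : ∀ x, x ≠ u → x ≠ v → H1.Adj u x → H2.Adj u x := by
    intro x hxu hxv hadj
    have hK : (map4 H2 hne).Adj u x := by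
      rw [← heq]
      exact Or.inl ⟨u, x, hadj, rho_of_ne hne, rho_of_ne hxv, Ne.symm hxu⟩
    rcases hK with ⟨a, b, hab, ha, hbx, -⟩ | ⟨-, hxv'⟩ | ⟨huv', -⟩
    · have hbx' : b = x := by
        by_cases hbv : b = v
        · rw [hbv, rho_v] at hbx; exact absurd hbx.symm hxu
        · rwa [rho_of_ne hbv] at hbx
      by_cases hav : a = v
      · have hvx : G.Adj v x := by
          have := H2.adj_sub hab; rwa [hav, hbx'] at this
        exact absurd (H1.adj_sub hadj) (fun hc => no_common hb hc hvx)
      · rw [rho_of_ne hav] at ha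
        rw [← ha, ← hbx']; exact hab
    · exact absurd hxv' hxv
    · exact absurd huv' hne
  have key' : ∀ x, x ≠ u → x ≠ v → H1.Adj v x → H2.Adj v x := by
    intro x hxu hxv hadj
    have hK : (map4 H2 hne).Adj u x := by
      rw [← heq]
      exact Or.inl ⟨v, x, hadj, rho_v u v, rho_of_ne hxv, Ne.symm hxu⟩
    rcases hK with ⟨a, b, hab, ha, hbx, -⟩ | ⟨-, hxv'⟩ | ⟨huv', -⟩
    · have hbx' : b = x := by
        by_cases hbv : b = v
        · rw [hbv, rho_v] at hbx; exact absurd hbx.symm hxu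
        · rwa [rho_of_ne hbv] at hbx
      by_cases hav : a = v
      · rw [← hav, ← hbx']; exact hab
      · rw [rho_of_ne hav] at ha
        have hux : G.Adj u x := by
          have := H2.adj_sub hab; rwa [ha, hbx'] at this
        exact absurd (H1.adj_sub hadj) (fun hc => no_common hb hux hc)
    · exact absurd hxv' hxv
    · exact absurd huv' hne
  constructor
  · intro x hx
    have hx' : x ∈ (map4 H2 hne).verts := by
      rw [← heq]; exact Or.inl hx
    rcases hx' with hx' | hx'
    · exact hx'
    · rcases hx' with hx' | hx'
      · rwa [hx']
      · rw [Set.mem_singleton_iff] at hx'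
        rwa [hx']
  · intro x y hxy
    by_cases hxu : x = u
    · by_cases hyv : y = v
      · rw [hxu, hyv]; exact h2uv
      · by_cases hyu : y = u
        · exact absurd (hxu.trans hyu.symm) (H1.adj_sub hxy).ne
        · rw [hxu]; exact key y hyu hyv (hxu ▸ hxy)
    · by_cases hxv : x = v
      · by_cases hyu : y = u
        · rw [hxv, hyu]; exact h2uv.symm
        · by_cases hyv : y = v
          · exact absurd (hxv.trans hyv.symm) (H1.adj_sub hxy).ne
          · rw [hxv]; exact key' y hyu hyv (hxv ▸ hxy)
      · by_cases hyu : y = u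
        · rw [hyu]; exact (key x hxu hxv (hyu ▸ hxy.symm)).symm
        · by_cases hyv : y = v
          · rw [hyv]; exact (key' x hxu hxv (hyv ▸ hxy.symm)).symm
          · have hK : (map4 H2 hne).Adj x y := by
              rw [← heq]
              exact Or.inl ⟨x, y, hxy, rho_of_ne hxv, rho_of_ne hyv, (H1.adj_sub hxy).ne⟩
            rcases hK with ⟨a, b, hab, ha, hb, -⟩ | ⟨hxu', -⟩ | ⟨hxv', -⟩
            · have hax : a = x := by
                by_cases hav : a = v
                · rw [hav, rho_v] at ha; exact absurd ha.symm hxu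
                · rwa [rho_of_ne hav] at ha
              have hby : b = y := by
                by_cases hbv : b = v
                · rw [hbv, rho_v] at hb; exact absurd hb.symm hyu
                · rwa [rho_of_ne hbv] at hb
              rw [← hax, ← hby]; exact hab
            · exact absurd hxu' hxu
            · exact absurd hxv' hxv

lemma map1_ne_map3 (hb : G.IsBridge s(u, v)) {H1 H2 : G.Subgraph}
    {h1 : v ∉ H1.verts} {h2 : u ∉ H2.verts} (hH2 : H2.Connected)
    (hv2 : v ∈ H2.verts) (hs2 : H2.verts ≠ {v}) :
    map1 (u := u) H1 h1 ≠ map3 (v := v) H2 h2 := by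
  intro heq
  obtain ⟨y, hy⟩ := exists_adj_of_mem H2 hH2 hv2 hs2
  have hyu : y ≠ u := ne_of_notMem h2 (H2.edge_vert hy.symm)
  have hyv : y ≠ v := (H2.adj_sub hy).ne'
  have hK : (map3 (v := v) H2 h2).Adj u y := ⟨v, y, hy, rho_v u v, rho_of_ne hyv⟩
  rw [← heq] at hK
  exact no_common hb (H1.adj_sub hK) (H2.adj_sub hy)

lemma verts_singleton_inj {H1 H2 : G.Subgraph} (h1 : H1.verts = {v})
    (h2 : H2.verts = {v}) : H1 = H2 := by
  have hA : ∀ (H : G.Subgraph), H.verts = {v} → ∀ x y, ¬H.Adj x y := by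
    intro H hH x y hxy
    have hx : x = v := by
      have := H.edge_vert hxy; rw [hH] at this; exact this
    have hy : y = v := by
      have := H.edge_vert hxy.symm; rw [hH] at this; exact this
    exact (H.adj_sub hxy).ne (hx.trans hy.symm)
  refine Subgraph.ext (h1.trans h2.symm) ?_
  funext x y
  exact iff_iff_eq.mp (iff_of_false (hA H1 h1 x y) (hA H2 h2 x y))

/-- The subgraph-level injection from connected subgraphs of `G` to those of the
contracted graph. -/
noncomputable def PhiS (G : SimpleGraph V) (u v : V) (hne : u ≠ v) (H : G.Subgraph) :
    (contractEdgeAddPendant G u v).Subgraph :=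
  letI : ∀ p : Prop, Decidable p := fun p => Classical.propDecidable p
  if hv : v ∈ H.verts then
    if hu : u ∈ H.verts then map4 H hne
    else if _hs : H.verts = {v} then
      SimpleGraph.singletonSubgraph _ v
    else map3 H hu
  else map1 H hv

lemma PhiS_connected (G : SimpleGraph V) (u v : V) (hne : u ≠ v) (H : G.Subgraph)
    (hH : H.Connected) : (PhiS G u v hne H).Connected := by
  unfold PhiS
  split_ifs with h1 h2 h3
  · exact map4_connected hH hne h2
  · exact Subgraph.singletonSubgraph_connected
  · exact map3_connected hH h2
  · exact map1_connected hH h1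

/-- The injection from connected subgraphs of `G` to those of the contracted graph. -/
noncomputable def Phi (G : SimpleGraph V) (u v : V) (hne : u ≠ v)
    (H : {H : G.Subgraph // H.Connected}) :
    {K : (contractEdgeAddPendant G u v).Subgraph // K.Connected} :=
  ⟨PhiS G u v hne H.1, PhiS_connected G u v hne H.1 H.2⟩

lemma Phi_injective (hb : G.IsBridge s(u, v)) (hne : u ≠ v) :
    Function.Injective (Phi G u v hne) := by
  intro H1 H2 heq
  apply Subtype.ext
  have heq' : PhiS G u v hne H1.1 = PhiS G u v hne H2.1 := congrArg Subtype.val heq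
  unfold PhiS at heq'
  by_cases hv1 : v ∈ H1.1.verts <;> by_cases hv2 : v ∈ H2.1.verts
  · rw [dif_pos hv1, dif_pos hv2] at heq'
    by_cases hu1 : u ∈ H1.1.verts <;> by_cases hu2 : u ∈ H2.1.verts
    · rw [dif_pos hu1, dif_pos hu2] at heq'
      have h1uv : H1.1.Adj u v := adj_of_mem_conn hb H1.1 H1.2 hu1 hv1
      have h2uv : H2.1.Adj u v := adj_of_mem_conn hb H2.1 H2.2 hu2 hv2
      exact le_antisymm (map4_le hb h1uv h2uv heq') (map4_le hb h2uv h1uv heq'.symm)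
    · rw [dif_pos hu1, dif_neg hu2] at heq'
      exfalso
      by_cases hs2 : H2.1.verts = {v}
      · rw [dif_pos hs2] at heq'
        have : u ∈ (SimpleGraph.singletonSubgraph (contractEdgeAddPendant G u v) v).verts := by
          rw [← heq']; exact Or.inr (Or.inl rfl)
        exact hne this
      · rw [dif_neg hs2] at heq'
        have : v ∈ (map3 (v := v) H2.1 hu2).verts := by
          rw [← heq']; exact Or.inr (Or.inr rfl)
        exact v_not_mem_map3 hne hu2 this
    · rw [dif_neg hu1, dif_pos hu2] at heq'
      exfalso
      by_cases hs1 : H1.1.verts = {v}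
      · rw [dif_pos hs1] at heq'
        have : u ∈ (SimpleGraph.singletonSubgraph (contractEdgeAddPendant G u v) v).verts := by
          rw [heq']; exact Or.inr (Or.inl rfl)
        exact hne this
      · rw [dif_neg hs1] at heq'
        have : v ∈ (map3 (v := v) H1.1 hu1).verts := by
          rw [heq']; exact Or.inr (Or.inr rfl)
        exact v_not_mem_map3 hne hu1 this
    · rw [dif_neg hu1, dif_neg hu2] at heq'
      by_cases hs1 : H1.1.verts = {v} <;> by_cases hs2 : H2.1.verts = {v}
      · exact verts_singleton_inj hs1 hs2
      · rw [dif_pos hs1, dif_neg hs2] at heq'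
        exfalso
        have : v ∈ (map3 (v := v) H2.1 hu2).verts := by
          rw [← heq']; exact rfl
        exact v_not_mem_map3 hne hu2 this
      · rw [dif_neg hs1, dif_pos hs2] at heq'
        exfalso
        have : v ∈ (map3 (v := v) H1.1 hu1).verts := by
          rw [heq']; exact rfl
        exact v_not_mem_map3 hne hu1 this
      · rw [dif_neg hs1, dif_neg hs2] at heq'
        exact le_antisymm (map3_le heq') (map3_le heq'.symm)
  · rw [dif_pos hv1, dif_neg hv2] at heq'
    exfalso
    by_cases hu1 : u ∈ H1.1.verts
    · rw [dif_pos hu1] at heq'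
      have : v ∈ (map1 (u := u) H2.1 hv2).verts := by
        rw [← heq']; exact Or.inr (Or.inr rfl)
      exact hv2 this
    · rw [dif_neg hu1] at heq'
      by_cases hs1 : H1.1.verts = {v}
      · rw [dif_pos hs1] at heq'
        have : v ∈ (map1 (u := u) H2.1 hv2).verts := by
          rw [← heq']; exact rfl
        exact hv2 this
      · rw [dif_neg hs1] at heq'
        exact map1_ne_map3 hb H1.2 hv1 hs1 heq'.symm
  · rw [dif_neg hv1, dif_pos hv2] at heq'
    exfalso
    by_cases hu2 : u ∈ H2.1.verts
    · rw [dif_pos hu2] at heq'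
      have : v ∈ (map1 (u := u) H1.1 hv1).verts := by
        rw [heq']; exact Or.inr (Or.inr rfl)
      exact hv1 this
    · rw [dif_neg hu2] at heq'
      by_cases hs2 : H2.1.verts = {v}
      · rw [dif_pos hs2] at heq'
        have : v ∈ (map1 (u := u) H1.1 hv1).verts := by
          rw [heq']; exact rfl
        exact hv1 this
      · rw [dif_neg hs2] at heq'
        exact map1_ne_map3 hb H2.2 hv2 hs2 heq'
  · rw [dif_neg hv1, dif_neg hv2] at heq'
    exact map1_inj heq'

/-- The star with center `u` and leaves `a`, `b`, where `a` is a `G`-neighbor of `u`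
and `b` is a `G`-neighbor of `v`. -/
def star2 (hne : u ≠ v) {a b : V} (hua : G.Adj u a) (hav : a ≠ v) (hvb : G.Adj v b) (hbu : b ≠ u) :
    (contractEdgeAddPendant G u v).Subgraph where
  verts := {u, a, b}
  Adj x y := (x = u ∧ y = a) ∨ (x = a ∧ y = u) ∨ (x = u ∧ y = b) ∨ (x = b ∧ y = u)
  adj_sub := by
    rintro x y (⟨rfl, rfl⟩ | ⟨rfl, rfl⟩ | ⟨rfl, rfl⟩ | ⟨rfl, rfl⟩)
    · exact adj1 hne hav hua
    · exact (adj1 hne hav hua).symm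
    · exact adj2 hbu hvb.ne' hvb
    · exact (adj2 hbu hvb.ne' hvb).symm
  edge_vert := by
    rintro x y (⟨rfl, -⟩ | ⟨rfl, -⟩ | ⟨rfl, -⟩ | ⟨rfl, -⟩)
    · exact Or.inl rfl
    · exact Or.inr (Or.inl rfl)
    · exact Or.inl rfl
    · exact Or.inr (Or.inr rfl)
  symm := by
    constructor
    rintro x y (⟨rfl, rfl⟩ | ⟨rfl, rfl⟩ | ⟨rfl, rfl⟩ | ⟨rfl, rfl⟩)
    · exact Or.inr (Or.inl ⟨rfl, rfl⟩)
    · exact Or.inl ⟨rfl, rfl⟩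
    · exact Or.inr (Or.inr (Or.inr ⟨rfl, rfl⟩))
    · exact Or.inr (Or.inr (Or.inl ⟨rfl, rfl⟩))

lemma star2_connected (hne : u ≠ v) {a b : V} (hua : G.Adj u a) (hav : a ≠ v) (hvb : G.Adj v b)
    (hbu : b ≠ u) : (star2 hne hua hav hvb hbu).Connected := by
  rw [Subgraph.connected_iff]
  refine ⟨⟨?_⟩, ⟨u, Or.inl rfl⟩⟩
  have hto : ∀ (x : V) (hx : x ∈ (star2 hne hua hav hvb hbu).verts),
      (star2 hne hua hav hvb hbu).coe.Reachable ⟨x, hx⟩ ⟨u, Or.inl rfl⟩ := by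
    intro x hx
    rcases hx with hx | hx | hx
    · subst hx; exact Reachable.refl _
    · subst hx
      exact Adj.reachable (by exact Or.inr (Or.inl ⟨rfl, rfl⟩))
    · rw [Set.mem_singleton_iff] at hx
      subst hx
      exact Adj.reachable (by exact Or.inr (Or.inr (Or.inr ⟨rfl, rfl⟩)))
  rintro ⟨x, hx⟩ ⟨y, hy⟩
  exact (hto x hx).trans (hto y hy).symm

lemma star2_not_mem_range (hb : G.IsBridge s(u, v)) (hne : u ≠ v) {a b : V}
    (hua : G.Adj u a) (hav : a ≠ v) (hvb : G.Adj v b) (hbu : b ≠ u) :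
    (⟨star2 hne hua hav hvb hbu, star2_connected hne hua hav hvb hbu⟩ :
      {K : (contractEdgeAddPendant G u v).Subgraph // K.Connected}) ∉
      Set.range (Phi G u v hne) := by
  rintro ⟨⟨H, hH⟩, heq⟩
  have heq' : PhiS G u v hne H = star2 hne hua hav hvb hbu := congrArg Subtype.val heq
  unfold PhiS at heq'
  by_cases hv1 : v ∈ H.verts
  · rw [dif_pos hv1] at heq'
    by_cases hu1 : u ∈ H.verts
    · rw [dif_pos hu1] at heq'
      have hvmem : v ∈ (star2 hne hua hav hvb hbu).verts := by
        rw [← heq']; exact Or.inr (Or.inr rfl)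
      rcases hvmem with h' | h' | h'
      · exact hne h'.symm
      · exact hav h'.symm
      · rw [Set.mem_singleton_iff] at h'
        exact hvb.ne' h'.symm
    · rw [dif_neg hu1] at heq'
      by_cases hs1 : H.verts = {v}
      · rw [dif_pos hs1] at heq'
        have humem : u ∈ (SimpleGraph.singletonSubgraph (contractEdgeAddPendant G u v) v).verts := by
          rw [heq']; exact Or.inl rfl
        exact hne humem
      · rw [dif_neg hs1] at heq'
        have hK : (star2 hne hua hav hvb hbu).Adj u a := Or.inl ⟨rfl, rfl⟩
        rw [← heq'] at hK
        obtain ⟨p, q, hpq, hp, hq⟩ := hK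
        have hpv : p = v := by
          by_cases hpv : p = v
          · exact hpv
          · rw [rho_of_ne hpv] at hp
            exact absurd hp (ne_of_notMem hu1 (H.edge_vert hpq))
        have hqa : q = a := by
          by_cases hqv : q = v
          · rw [hqv, rho_v] at hq
            exact absurd hq hua.ne
          · rwa [rho_of_ne hqv] at hq
        have : G.Adj v a := by
          have := H.adj_sub hpq; rwa [hpv, hqa] at this
        exact no_common hb hua this
  · rw [dif_neg hv1] at heq'
    have hK : (star2 hne hua hav hvb hbu).Adj u b := Or.inr (Or.inr (Or.inl ⟨rfl, rfl⟩))
    rw [← heq'] at hK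
    exact no_common hb (H.adj_sub hK) hvb

instance subgraphFinite [Finite V] : Finite (G.Subgraph) := by
  have hinj : Function.Injective (fun H : G.Subgraph => (H.verts, H.Adj)) := by
    intro A B h
    exact Subgraph.ext (congrArg Prod.fst h) (congrArg Prod.snd h)
  exact Finite.of_injective _ hinj

end Maps

end AdjLemmas

end CoreIndexAux

/-- If `{u,v}` is a bridge of a connected graph `G` with neither endpoint a pendant
vertex, and `G'` is obtained from `G` by contracting `{u,v}` and attaching a new pendant
vertex at the merged vertex, then `F(G') > F(G)`. -/
theorem coreIndex_lt_contractEdgeAddPendant {V : Type*} [Fintype V]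
    (G : SimpleGraph V) [DecidableRel G.Adj] (u v : V)
    (hconn : G.Connected) (hbridge : G.IsBridge s(u, v))
    (hu : 2 ≤ G.degree u) (hv : 2 ≤ G.degree v) :
    coreIndex G < coreIndex (contractEdgeAddPendant G u v) := by
  classical
  have hne : u ≠ v := (CoreIndexAux.bridge_adj hbridge hconn).ne
  have hcard_u : 1 < (G.neighborFinset u).card := lt_of_lt_of_le one_lt_two hu
  have hcard_v : 1 < (G.neighborFinset v).card := lt_of_lt_of_le one_lt_two hv
  obtain ⟨a, haf, hav⟩ := Finset.exists_mem_ne hcard_u v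
  obtain ⟨b, hbf, hbu⟩ := Finset.exists_mem_ne hcard_v u
  rw [mem_neighborFinset] at haf hbf
  letI : Fintype {H : G.Subgraph // H.Connected} := Fintype.ofFinite _
  letI : Fintype {K : (contractEdgeAddPendant G u v).Subgraph // K.Connected} :=
    Fintype.ofFinite _
  rw [coreIndex, coreIndex, Nat.card_eq_fintype_card, Nat.card_eq_fintype_card]
  exact Fintype.card_lt_of_injective_of_notMem (CoreIndexAux.Phi G u v hne)
    (CoreIndexAux.Phi_injective hbridge hne)
    (CoreIndexAux.star2_not_mem_range hbridge hne haf hav hbf hbu)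
end
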